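/- arXiv:2603.25605 — 2 statements merged into one kernel-verified Lean document; each statement's English description precedes it below -/
import Mathlib

section
/- Let U be an open subset of ℝ^m and K a compact topological space. Let f : U × K → ℝ be continuous, suppose that for all (x,y) ∈ U × K and all h ∈ ℝ^m the directional derivative ∇_h f(x,y) = lim_{t→0} t⁻¹(f(x+th,y) − f(x,y)) exists, and suppose that for each h the map (x,y) ↦ ∇_h f(x,y) is continuous on U × K. Then the function g(x) := sup_{y ∈ K} f(x,y) admits right directional derivatives in all directions at every x ∈ U, and ∇⁺_h g(x) = sup_{y ∈ argmax f(x,·)} ∇_h f(x,y). -/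
open Filter Topology Set

/-- Danskin's theorem: directional differentiability of `g x = sup_{y ∈ K} f x y`. -/
theorem danskin {m : ℕ} {U : Set (Fin m → ℝ)} (hU : IsOpen U)
    {K : Type*} [TopologicalSpace K] [CompactSpace K] [Nonempty K]
    (f : (Fin m → ℝ) → K → ℝ)
    (hf : Continuous fun p : (Fin m → ℝ) × K => f p.1 p.2)
    (D : (Fin m → ℝ) → K → (Fin m → ℝ) → ℝ)
    (hD : ∀ x ∈ U, ∀ (y : K) (h : Fin m → ℝ),
      Tendsto (fun t : ℝ => t⁻¹ * (f (x + t • h) y - f x y)) (𝓝[≠] 0) (𝓝 (D x y h)))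
    (hDcont : ∀ h : Fin m → ℝ, Continuous fun p : (Fin m → ℝ) × K => D p.1 p.2 h) :
    ∀ x ∈ U, ∀ h : Fin m → ℝ,
      Tendsto (fun t : ℝ => t⁻¹ * ((⨆ y : K, f (x + t • h) y) - ⨆ y : K, f x y))
        (𝓝[>] (0 : ℝ))
        (𝓝 (sSup ((fun y => D x y h) '' {y : K | ∀ z : K, f x z ≤ f x y}))) := by
  classical
  intro x hxU h
  set g : (Fin m → ℝ) → ℝ := fun x => ⨆ y : K, f x y with hgdef
  -- continuity of slices
  have hfy : ∀ x' : Fin m → ℝ, Continuous (f x') := fun x' =>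
    hf.comp (Continuous.prodMk_right x')
  have hbdd : ∀ x' : Fin m → ℝ, BddAbove (Set.range (f x')) := fun x' =>
    (isCompact_range (hfy x')).bddAbove
  -- continuity of g
  have hgc : Continuous g := by
    have := (isCompact_univ : IsCompact (univ : Set K)).continuous_sSup
      (f := fun x' y => f x' y) hf
    simp only [image_univ] at this
    refine this.congr fun x' => ?_
    simp [hgdef, iSup]
  -- max attained
  have hmax : ∀ x' : Fin m → ℝ, ∃ y0 : K, ∀ z : K, f x' z ≤ f x' y0 := by
    intro x'
    obtain ⟨y0, -, hy0⟩ := isCompact_univ.exists_isMaxOn univ_nonempty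
      (hfy x').continuousOn
    exact ⟨y0, fun z => hy0 (mem_univ z)⟩
  have hgeq : ∀ (x' : Fin m → ℝ) (y0 : K), (∀ z : K, f x' z ≤ f x' y0) → g x' = f x' y0 := by
    intro x' y0 hy0
    exact le_antisymm (ciSup_le hy0) (le_ciSup (hbdd x') y0)
  have hgle : ∀ (x' : Fin m → ℝ) (y : K), f x' y ≤ g x' := fun x' y =>
    le_ciSup (hbdd x') y
  -- argmax set
  set A : Set K := {y : K | ∀ z : K, f x z ≤ f x y} with hAdef
  have hAne : A.Nonempty := hmax x
  have hAclosed : IsClosed A := by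
    have : A = ⋂ z : K, {y : K | f x z ≤ f x y} := by
      ext y; simp [hAdef]
    rw [this]
    exact isClosed_iInter fun z => isClosed_le continuous_const (hfy x)
  have hDx : Continuous fun y : K => D x y h :=
    (hDcont h).comp (Continuous.prodMk_right x)
  have hIbdd : BddAbove ((fun y => D x y h) '' A) :=
    ((hAclosed.isCompact).image hDx).bddAbove
  set L : ℝ := sSup ((fun y => D x y h) '' A) with hLdef
  -- choose δ with segment in U
  have hVopen : IsOpen ((fun s : ℝ => x + s • h) ⁻¹' U) :=
    hU.preimage (continuous_const.add (continuous_id.smul continuous_const))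
  have hV0 : (0 : ℝ) ∈ (fun s : ℝ => x + s • h) ⁻¹' U := by
    simp [hxU]
  obtain ⟨δ, hδpos, hδ⟩ := Metric.isOpen_iff.1 hVopen 0 hV0
  have hmemU : ∀ s : ℝ, |s| < δ → x + s • h ∈ U := by
    intro s hs
    exact hδ (by simpa [Real.dist_eq] using hs)
  -- derivative of s ↦ f (x + s • h) y
  have hder : ∀ s : ℝ, |s| < δ → ∀ y : K,
      HasDerivAt (fun u : ℝ => f (x + u • h) y) (D (x + s • h) y h) s := by
    intro s hs y
    rw [hasDerivAt_iff_tendsto_slope_zero]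
    have := hD (x + s • h) (hmemU s hs) y h
    refine this.congr (fun v => ?_)
    simp [add_smul, add_assoc, smul_eq_mul]
  -- key: for 0 < t < δ, bound quotient by D at intermediate point
  have key : ∀ t : ℝ, ∃ (yy : K) (c : ℝ), 0 < t → t < δ →
      (∀ z : K, f (x + t • h) z ≤ f (x + t • h) yy) ∧ c ∈ Ioo 0 t ∧
      t⁻¹ * (g (x + t • h) - g x) ≤ D (x + c • h) yy h := by
    intro t
    by_cases ht : 0 < t ∧ t < δ
    · obtain ⟨ht0, htδ⟩ := ht
      obtain ⟨yy, hyy⟩ := hmax (x + t • h)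
      have hcont : ContinuousOn (fun u : ℝ => f (x + u • h) yy) (Icc 0 t) :=
        (hf.comp ((continuous_const.add (continuous_id.smul continuous_const)).prodMk
          continuous_const)).continuousOn
      have hdiff : ∀ s ∈ Ioo (0:ℝ) t, HasDerivAt (fun u : ℝ => f (x + u • h) yy)
          ((fun s => D (x + s • h) yy h) s) s := by
        intro s hs
        exact hder s (by rw [abs_of_pos hs.1]; linarith [hs.2]) yy
      obtain ⟨c, hc, hceq⟩ := exists_hasDerivAt_eq_slope (fun u : ℝ => f (x + u • h) yy)
        (fun s => D (x + s • h) yy h) ht0 hcont hdiff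
      refine ⟨yy, c, fun _ _ => ⟨hyy, hc, ?_⟩⟩
      have h1 : g (x + t • h) - g x ≤ f (x + t • h) yy - f x yy := by
        have := hgeq (x + t • h) yy hyy
        have := hgle x yy
        linarith [hgeq (x + t • h) yy hyy, hgle x yy]
      have h2 : t⁻¹ * (g (x + t • h) - g x) ≤ t⁻¹ * (f (x + t • h) yy - f x yy) := by
        apply mul_le_mul_of_nonneg_left h1 (inv_nonneg.2 ht0.le)
      rw [hceq]
      calc t⁻¹ * (g (x + t • h) - g x) ≤ t⁻¹ * (f (x + t • h) yy - f x yy) := h2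
        _ = (f (x + t • h) yy - f (x + (0:ℝ) • h) yy) / (t - 0) := by
            simp [div_eq_inv_mul]
    · exact ⟨Classical.arbitrary K, 0, fun h1 h2 => absurd ⟨h1, h2⟩ ht⟩
  choose Y C hYC using key
  -- main goal
  show Tendsto (fun t : ℝ => t⁻¹ * (g (x + t • h) - g x)) (𝓝[>] (0:ℝ)) (𝓝 L)
  rw [tendsto_order]
  constructor
  · -- lower bound
    intro b hb
    obtain ⟨d, hdmem, hbd⟩ := exists_lt_of_lt_csSup (hAne.image _) hb
    obtain ⟨y0, hy0A, rfl⟩ := hdmem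
    have htend : Tendsto (fun t : ℝ => t⁻¹ * (f (x + t • h) y0 - f x y0))
        (𝓝[>] (0:ℝ)) (𝓝 (D x y0 h)) :=
      (hD x hxU y0 h).mono_left (nhdsWithin_mono 0 fun t ht => ne_of_gt ht)
    filter_upwards [htend.eventually (eventually_gt_nhds hbd),
      self_mem_nhdsWithin] with t hbt (ht : 0 < t)
    have hle : t⁻¹ * (f (x + t • h) y0 - f x y0) ≤ t⁻¹ * (g (x + t • h) - g x) := by
      apply mul_le_mul_of_nonneg_left _ (inv_nonneg.2 ht.le)
      have := hgle (x + t • h) y0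
      have := hgeq x y0 hy0A
      linarith
    linarith
  · -- upper bound
    intro b hb
    by_contra hcon
    rw [not_eventually] at hcon
    have hcon' : ∃ᶠ t in 𝓝[>] (0:ℝ), b ≤ t⁻¹ * (g (x + t • h) - g x) := by
      refine hcon.mono fun t ht => not_lt.1 ht
    set l' : Filter ℝ := 𝓝[>] (0:ℝ) ⊓ 𝓟 {t : ℝ | b ≤ t⁻¹ * (g (x + t • h) - g x)} with hl'
    have hl'ne : l'.NeBot := frequently_iff_neBot.1 hcon'
    have hIoo : Ioo (0:ℝ) δ ∈ l' :=
      Filter.mem_inf_of_left (Ioo_mem_nhdsGT_of_mem ⟨le_refl 0, hδpos⟩)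
    set l'' : Filter ℝ := l' ⊓ 𝓟 (Ioo (0:ℝ) δ) with hl''
    have hl''eq : l'' = l' := inf_eq_left.2 (le_principal_iff.2 hIoo)
    have hl''ne : l''.NeBot := by rw [hl''eq]; exact hl'ne
    -- eventual facts on l''
    have hEv : ∀ᶠ t in l'', (0 < t ∧ t < δ) ∧ b ≤ t⁻¹ * (g (x + t • h) - g x) := by
      have h1 : ∀ᶠ t in l'', t ∈ Ioo (0:ℝ) δ := eventually_inf_principal.2 (by
        filter_upwards with t ht; exact ht)
      have h2 : ∀ᶠ t in l'', b ≤ t⁻¹ * (g (x + t • h) - g x) := by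
        rw [hl''eq, hl']
        exact eventually_inf_principal.2 (by filter_upwards with t ht; exact ht)
      filter_upwards [h1, h2] with t ht1 ht2 using ⟨⟨ht1.1, ht1.2⟩, ht2⟩
    -- cluster point of Y
    have : (Filter.map Y l'').NeBot := Filter.map_neBot
    obtain ⟨ystar, hystar⟩ := exists_clusterPt_of_compactSpace (Filter.map Y l'')
    -- the filter on which everything converges
    set Ψ : Filter ℝ := l'' ⊓ Filter.comap Y (𝓝 ystar) with hΨ
    have hΨne : Ψ.NeBot := by
      rw [← Filter.map_neBot_iff Y, hΨ, Filter.push_pull]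
      have := hystar.neBot
      rwa [inf_comm] at this
    have hΨl : Ψ ≤ l'' := inf_le_left
    have hEvΨ : ∀ᶠ t in Ψ, (0 < t ∧ t < δ) ∧ b ≤ t⁻¹ * (g (x + t • h) - g x) :=
      hEv.filter_mono hΨl
    have hYCΨ : ∀ᶠ t in Ψ, (∀ z : K, f (x + t • h) z ≤ f (x + t • h) (Y t)) ∧
        C t ∈ Ioo 0 t ∧ t⁻¹ * (g (x + t • h) - g x) ≤ D (x + C t • h) (Y t) h := by
      filter_upwards [hEvΨ] with t ht
      exact hYC t ht.1.1 ht.1.2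
    have htendY : Tendsto Y Ψ (𝓝 ystar) := tendsto_iff_comap.2 inf_le_right
    have htendt : Tendsto (fun t : ℝ => t) Ψ (𝓝 0) := by
      have : Ψ ≤ 𝓝[>] (0:ℝ) := hΨl.trans (le_trans (by rw [hl''eq]) inf_le_left)
      exact tendsto_id.mono_left (this.trans nhdsWithin_le_nhds)
    have htendC : Tendsto C Ψ (𝓝 0) := by
      apply tendsto_of_tendsto_of_tendsto_of_le_of_le' tendsto_const_nhds htendt
      · filter_upwards [hYCΨ] with t ht using ht.2.1.1.le
      · filter_upwards [hYCΨ] with t ht using ht.2.1.2.le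
    have hline : ∀ {c : ℝ → ℝ}, Tendsto c Ψ (𝓝 0) →
        Tendsto (fun t => x + c t • h) Ψ (𝓝 x) := by
      intro c hc
      have hcont : Tendsto (fun s : ℝ => x + s • h) (𝓝 0) (𝓝 x) := by
        have hc2 : Continuous (fun s : ℝ => x + s • h) :=
          continuous_const.add (continuous_id.smul continuous_const)
        simpa using hc2.tendsto (0:ℝ)
      exact hcont.comp hc
    -- D converges to D x ystar h
    have htendD : Tendsto (fun t => D (x + C t • h) (Y t) h) Ψ (𝓝 (D x ystar h)) :=
      ((hDcont h).tendsto (x, ystar)).comp ((hline htendC).prodMk_nhds htendY)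
    have hbD : b ≤ D x ystar h := by
      refine ge_of_tendsto htendD ?_
      filter_upwards [hEvΨ, hYCΨ] with t ht1 ht2
      exact ht1.2.trans ht2.2.2
    -- ystar is in argmax
    have hystarA : ystar ∈ A := by
      have htf : Tendsto (fun t => f (x + t • h) (Y t)) Ψ (𝓝 (f x ystar)) :=
        (hf.tendsto (x, ystar)).comp ((hline htendt).prodMk_nhds htendY)
      have htg : Tendsto (fun t => f (x + t • h) (Y t)) Ψ (𝓝 (g x)) := by
        have h1 : Tendsto (fun t => g (x + t • h)) Ψ (𝓝 (g x)) :=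
          (hgc.tendsto x).comp (hline htendt)
        refine h1.congr' ?_
        filter_upwards [hYCΨ] with t ht
        exact (hgeq (x + t • h) (Y t) ht.1).symm ▸ rfl
      have heq : f x ystar = g x := tendsto_nhds_unique htf htg
      intro z
      rw [heq]
      exact hgle x z
    have hDL : D x ystar h ≤ L := le_csSup hIbdd ⟨ystar, hystarA, rfl⟩
    linarith
end

section
/- Let Δ = {t ∈ ℝ^{n+1} : t_i ≥ 0 for all i, Σ_i t_i = 1} be the standard n-simplex. Let f : Δ → Δ be a continuous map such that for every index i and every t ∈ Δ with t_i = 0, also f(t)_i = 0 (i.e. f maps each closed face of Δ into itself). Then f is surjective. -/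
open Finset

namespace SimplexSperner
attribute [local instance] Classical.propDecidable
variable {n : ℕ}






/-- The move vector transferring one unit from coordinate `i+1` to coordinate `i`. -/
def mv (i : Fin n) : Fin (n + 1) → ℤ :=
  fun j => (if j = i.castSucc then 1 else 0) - (if j = i.succ then 1 else 0)

lemma sum_mv (i : Fin n) : ∑ j, mv i j = 0 := by
  simp [mv, Finset.sum_sub_distrib]

lemma mv_self (i : Fin n) : mv i i.castSucc = 1 := by
  simp [mv, (Fin.castSucc_lt_succ (i := i)).ne]

lemma mv_succ_self (i : Fin n) : mv i i.succ = -1 := by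
  simp [mv, (Fin.castSucc_lt_succ (i := i)).ne']

lemma mv_eq_zero {i : Fin n} {j : Fin (n+1)} (h1 : j ≠ i.castSucc) (h2 : j ≠ i.succ) :
    mv i j = 0 := by simp [mv, h1, h2]

lemma mv_mem {i : Fin n} {j : Fin (n+1)} : mv i j = -1 ∨ mv i j = 0 ∨ mv i j = 1 := by
  by_cases h1 : j = i.castSucc <;> by_cases h2 : j = i.succ <;>
    simp_all [mv, (Fin.castSucc_lt_succ (i := i)).ne]

lemma mv_eq_one_iff {i : Fin n} {j : Fin (n+1)} : mv i j = 1 ↔ j = i.castSucc := by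
  constructor
  · intro h; by_contra hc
    by_cases h2 : j = i.succ <;> simp_all [mv]
  · rintro rfl; exact mv_self i

lemma mv_eq_neg_one_iff {i : Fin n} {j : Fin (n+1)} : mv i j = -1 ↔ j = i.succ := by
  constructor
  · intro h; by_contra hc
    by_cases h1 : j = i.castSucc <;> simp_all [mv, (Fin.castSucc_lt_succ (i := i)).ne]
  · rintro rfl; exact mv_succ_self i

/-- `k`-th vertex of the cell with base `b` and permutation `σ`. -/
def vert (b : Fin (n + 1) → ℤ) (σ : Equiv.Perm (Fin n)) (k : ℕ) (i : Fin (n + 1)) : ℤ :=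
  b i + ∑ j ∈ univ.filter (fun j : Fin n => (j : ℕ) < k), mv (σ j) i

lemma vert_zero (b σ) (i : Fin (n+1)) : vert b σ 0 i = b i := by
  simp [vert]

lemma vert_succ_of_lt (b σ) {k : ℕ} (h : k < n) (i : Fin (n+1)) :
    vert b σ (k + 1) i = vert b σ k i + mv (σ ⟨k, h⟩) i := by
  have : (univ.filter (fun j : Fin n => (j : ℕ) < k + 1)) =
      insert ⟨k, h⟩ (univ.filter (fun j : Fin n => (j : ℕ) < k)) := by
    ext j
    simp only [mem_filter, mem_univ, true_and, mem_insert, Nat.lt_succ_iff_lt_or_eq]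
    constructor
    · rintro (h | h)
      · exact Or.inr (by simpa using h)
      · exact Or.inl (Fin.ext h)
    · rintro (rfl | h)
      · exact Or.inr rfl
      · exact Or.inl (by simpa using h)
  rw [vert, this, Finset.sum_insert (by simp), vert]
  ring

lemma vert_of_le (b σ) {k : ℕ} (h : n ≤ k) (i : Fin (n+1)) :
    vert b σ k i = vert b σ n i := by
  have : (univ.filter (fun j : Fin n => (j : ℕ) < k)) =
      (univ.filter (fun j : Fin n => (j : ℕ) < n)) := by
    ext j; simp [j.isLt, lt_of_lt_of_le j.isLt h]
  rw [vert, this, vert]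

lemma sum_vert (b : Fin (n+1) → ℤ) (σ) (k : ℕ) : ∑ i, vert b σ k i = ∑ i, b i := by
  simp only [vert]
  rw [Finset.sum_add_distrib, Finset.sum_comm]
  simp [sum_mv]

/-- If no move between positions `k₁` and `k₂` touches coordinate `i`,
the coordinate is constant there. -/
lemma vert_flat (b σ) {k₁ k₂ : ℕ} (hk : k₁ ≤ k₂) (i : Fin (n+1))
    (h : ∀ j : Fin n, k₁ ≤ (j : ℕ) → (j : ℕ) < k₂ → mv (σ j) i = 0) :
    vert b σ k₂ i = vert b σ k₁ i := by
  rw [vert, vert]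
  congr 1
  refine (Finset.sum_subset ?_ ?_).symm
  · intro j hj; simp only [mem_filter, mem_univ, true_and] at *; omega
  · intro j hj hnj
    simp only [mem_filter, mem_univ, true_and] at hj hnj
    exact h j (by omega) hj






lemma image_succAbove_univ (k : Fin (n+1)) :
    univ.image k.succAbove = univ.erase k := by
  ext i
  simp only [mem_image, mem_univ, true_and, mem_erase, and_true]
  constructor
  · rintro ⟨j, rfl⟩; exact k.succAbove_ne j
  · intro h; exact Fin.exists_succAbove_eq h

/-- Parity of the number of "happy" facet positions equals the rainbow indicator. -/
lemma parity_happy (g : Fin (n+1) → Fin (n+1)) :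
    (∑ k : Fin (n+1), if (univ.erase k).image g = univ.erase (Fin.last n) then (1 : ZMod 2) else 0)
      = if univ.image g = univ then 1 else 0 := by
  by_cases hs : univ.image g = univ
  · -- g is bijective
    have hsurj : Function.Surjective g := by
      intro y; have : y ∈ univ.image g := by rw [hs]; exact mem_univ y
      simpa using this
    have hinj : Function.Injective g := Finite.injective_iff_surjective.mpr hsurj
    obtain ⟨k₀, hk₀⟩ := hsurj (Fin.last n)
    have key : ∀ k : Fin (n+1), ((univ.erase k).image g = univ.erase (Fin.last n)) ↔ k = k₀ := by
      intro k
      constructor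
      · intro h
        by_contra hne
        have : g k₀ ∈ (univ.erase k).image g :=
          mem_image_of_mem g (by simp [Ne.symm hne])
        rw [h, hk₀] at this
        simp at this
      · rintro rfl
        rw [Finset.image_erase hinj, hs, hk₀]
    rw [if_pos hs]
    calc (∑ k : Fin (n+1), if (univ.erase k).image g = univ.erase (Fin.last n) then (1 : ZMod 2) else 0)
        = ∑ k : Fin (n+1), if k = k₀ then (1 : ZMod 2) else 0 := by
          refine Finset.sum_congr rfl fun k _ => ?_
          rw [if_congr (key k) rfl rfl]
      _ = 1 := by rw [Finset.sum_ite_eq' univ k₀ (fun _ => (1:ZMod 2))]; simp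
  · rw [if_neg hs]
    have : (∑ k : Fin (n+1), if (univ.erase k).image g = univ.erase (Fin.last n) then (1 : ZMod 2) else 0)
        = ((univ.filter (fun k : Fin (n+1) => (univ.erase k).image g = univ.erase (Fin.last n))).card : ZMod 2) :=
      Finset.sum_boole _ _
    rw [this]
    set S := univ.filter (fun k : Fin (n+1) => (univ.erase k).image g = univ.erase (Fin.last n)) with hS
    rcases S.eq_empty_or_nonempty with h | ⟨k, hk⟩
    · simp [h]
    · have hkS : (univ.erase k).image g = univ.erase (Fin.last n) := by
        simpa [hS] using hk
      have hinjk : Set.InjOn g (univ.erase k : Finset (Fin (n+1))) := by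
        apply Finset.injOn_of_card_image_eq
        rw [hkS, card_erase_of_mem (mem_univ _), card_erase_of_mem (mem_univ _)]
      have hgk : g k ≠ Fin.last n := by
        intro h
        apply hs
        have : (univ : Finset (Fin (n+1))) = insert k (univ.erase k) :=
          (Finset.insert_erase (mem_univ k)).symm
        nth_rewrite 1 [this]
        rw [Finset.image_insert, hkS, h, Finset.insert_erase (mem_univ _)]
      have : g k ∈ (univ.erase k).image g := by rw [hkS]; simp [hgk]
      obtain ⟨k', hk'mem, hk'⟩ := Finset.mem_image.mp this
      have hk'ne : k' ≠ k := (Finset.mem_erase.mp hk'mem).1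
      -- k' is also happy
      have hk'S : k' ∈ S := by
        rw [hS, mem_filter]
        refine ⟨mem_univ _, ?_⟩
        apply Finset.Subset.antisymm
        · intro y hy
          obtain ⟨j, hjmem, rfl⟩ := Finset.mem_image.mp hy
          have hjk' : j ≠ k' := (Finset.mem_erase.mp hjmem).1
          by_cases hjk : j = k
          · subst hjk
            rw [← hk', ← hkS]
            exact mem_image_of_mem g (by simp [hk'ne])
          · rw [← hkS]
            exact mem_image_of_mem g (by simp [hjk])
        · intro y hy
          rw [← hkS] at hy
          obtain ⟨j, hjmem, rfl⟩ := Finset.mem_image.mp hy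
          have hjk : j ≠ k := (Finset.mem_erase.mp hjmem).1
          by_cases hjk2 : j = k'
          · subst hjk2
            rw [hk']
            exact mem_image_of_mem g (by simp [Ne.symm hk'ne])
          · exact mem_image_of_mem g (by simp [hjk2])
      have hSeq : S = {k, k'} := by
        apply Finset.Subset.antisymm
        · intro j hj
          have hjS : (univ.erase j).image g = univ.erase (Fin.last n) := by
            simpa [hS] using hj
          by_contra hjmem
          simp only [mem_insert, mem_singleton, not_or] at hjmem
          have hinjj : Set.InjOn g (univ.erase j : Finset (Fin (n+1))) := by
            apply Finset.injOn_of_card_image_eq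
            rw [hjS, card_erase_of_mem (mem_univ _), card_erase_of_mem (mem_univ _)]
          have hkmem : k ∈ (univ.erase j : Finset (Fin (n+1))) := by simp [Ne.symm hjmem.1]
          have hk'mem2 : k' ∈ (univ.erase j : Finset (Fin (n+1))) := by simp [Ne.symm hjmem.2]
          exact hk'ne (hinjj (by exact_mod_cast hk'mem2) (by exact_mod_cast hkmem) hk')
        · intro j hj
          simp only [mem_insert, mem_singleton] at hj
          rcases hj with rfl | rfl
          · exact hk
          · exact hk'S
      rw [hSeq, Finset.card_insert_of_notMem (by simp [Ne.symm hk'ne]), Finset.card_singleton]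
      rfl




lemma mv_ne_zero_cases {m : Fin n} {i : Fin (n+1)} (h : mv m i ≠ 0) :
    i = m.castSucc ∨ i = m.succ := by
  by_contra hc
  push_neg at hc
  exact h (mv_eq_zero hc.1 hc.2)

/-- Validity of a cell. -/
def Valid (N : ℕ) (b : Fin (n+1) → ℤ) (σ : Equiv.Perm (Fin n)) : Prop :=
  (∑ i, b i = (N : ℤ)) ∧ ∀ (k : ℕ) (i : Fin (n+1)), 0 ≤ vert b σ k i

noncomputable def cells (n N : ℕ) : Finset ((Fin (n+1) → ℤ) × Equiv.Perm (Fin n)) :=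
  (Finset.Icc (0 : Fin (n+1) → ℤ) (fun _ => N) ×ˢ univ).filter (fun p => Valid N p.1 p.2)

lemma mem_cells {N : ℕ} {p : (Fin (n+1) → ℤ) × Equiv.Perm (Fin n)} :
    p ∈ cells n N ↔ Valid N p.1 p.2 := by
  rw [cells, mem_filter, and_iff_right_iff_imp]
  intro hv
  rw [Finset.mem_product, Finset.mem_Icc]
  refine ⟨⟨?_, ?_⟩, mem_univ _⟩
  · intro i
    have := hv.2 0 i
    rwa [vert_zero] at this
  · intro i
    have h1 : p.1 i ≤ ∑ j, p.1 j := by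
      apply Finset.single_le_sum (f := p.1) (fun j _ => ?_) (mem_univ i)
      have := hv.2 0 j
      rwa [vert_zero] at this
    rw [hv.1] at h1
    exact h1

def Sperner (N : ℕ) (c : (Fin (n+1) → ℤ) → Fin (n+1)) : Prop :=
  ∀ x : Fin (n+1) → ℤ, (∀ i, 0 ≤ x i) → (∑ i, x i = (N : ℤ)) → 0 < x (c x)

def Rainbow (c : (Fin (n+1) → ℤ) → Fin (n+1)) (b : Fin (n+1) → ℤ) (σ : Equiv.Perm (Fin n)) : Prop :=
  univ.image (fun k : Fin (n+1) => c (vert b σ (k : ℕ))) = univ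

def Happy (c : (Fin (n+1) → ℤ) → Fin (n+1)) (b : Fin (n+1) → ℤ) (σ : Equiv.Perm (Fin n))
    (k : Fin (n+1)) : Prop :=
  univ.image (fun j : Fin n => c (vert b σ ((k.succAbove j : Fin (n+1)) : ℕ)))
    = univ.erase (Fin.last n)

def Bottom (b : Fin (n+1) → ℤ) (σ : Equiv.Perm (Fin n)) (k : Fin (n+1)) : Prop :=
  ∀ j : Fin n, vert b σ ((k.succAbove j : Fin (n+1)) : ℕ) (Fin.last n) = 0

lemma valid_lattice {N : ℕ} {b σ} (hv : Valid N b σ) (k : ℕ) :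
    (∀ i : Fin (n+1), 0 ≤ vert b σ k i) ∧ ∑ i, vert b σ k i = (N : ℤ) :=
  ⟨fun i => hv.2 k i, by rw [sum_vert]; exact hv.1⟩


section Middle

variable {N : ℕ} {c : (Fin (n+1) → ℤ) → Fin (n+1)} {b : Fin (n+1) → ℤ} {σ : Equiv.Perm (Fin n)}

lemma vert_swap_ne {k : ℕ} (hk0 : 0 < k) (hkn : k < n) {m : ℕ} (hm : m ≠ k) (i : Fin (n+1)) :
    vert b ((Equiv.swap (⟨k-1, by omega⟩ : Fin n) ⟨k, hkn⟩).trans σ) m i = vert b σ m i := by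
  unfold vert
  congr 1
  refine Finset.sum_equiv (Equiv.swap (⟨k-1, by omega⟩ : Fin n) ⟨k, hkn⟩) ?_ ?_
  · intro j
    simp only [mem_filter, mem_univ, true_and]
    rcases eq_or_ne j ⟨k-1, by omega⟩ with rfl | h1
    · rw [Equiv.swap_apply_left]; simp only [Fin.val_mk]; omega
    rcases eq_or_ne j ⟨k, hkn⟩ with rfl | h2
    · rw [Equiv.swap_apply_right]; simp only [Fin.val_mk]; omega
    · rw [Equiv.swap_apply_of_ne_of_ne h1 h2]
  · intro j _
    simp [Equiv.trans_apply]

lemma vert_swap_k {k : ℕ} (hk0 : 0 < k) (hkn : k < n) (i : Fin (n+1)) :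
    vert b ((Equiv.swap (⟨k-1, by omega⟩ : Fin n) ⟨k, hkn⟩).trans σ) k i
      = vert b σ (k-1) i + mv (σ ⟨k, hkn⟩) i := by
  have hins : (univ.filter (fun j : Fin n => (j : ℕ) < k))
      = insert (⟨k-1, by omega⟩ : Fin n) (univ.filter (fun j : Fin n => (j : ℕ) < k - 1)) := by
    ext j
    simp only [mem_filter, mem_univ, true_and, mem_insert]
    constructor
    · intro h
      rcases eq_or_ne (j : ℕ) (k-1) with h' | h'
      · exact Or.inl (Fin.ext h')
      · exact Or.inr (by omega)
    · rintro (rfl | h)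
      · simp only [Fin.val_mk]; omega
      · omega
  unfold vert
  rw [hins, Finset.sum_insert (by simp), Equiv.trans_apply, Equiv.swap_apply_left]
  have : ∑ j ∈ univ.filter (fun j : Fin n => (j : ℕ) < k - 1),
      mv (((Equiv.swap (⟨k-1, by omega⟩ : Fin n) ⟨k, hkn⟩).trans σ) j) i
      = ∑ j ∈ univ.filter (fun j : Fin n => (j : ℕ) < k - 1), mv (σ j) i := by
    refine Finset.sum_congr rfl fun j hj => ?_
    simp only [mem_filter, mem_univ, true_and] at hj
    rw [Equiv.trans_apply, Equiv.swap_apply_of_ne_of_ne]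
    · intro h; rw [h] at hj; simp only [Fin.val_mk] at hj; omega
    · intro h; rw [h] at hj; simp only [Fin.val_mk] at hj; omega
  rw [this]
  ring

lemma swap_ne {k : ℕ} (hk0 : 0 < k) (hkn : k < n) :
    (Equiv.swap (⟨k-1, by omega⟩ : Fin n) ⟨k, hkn⟩).trans σ ≠ σ := by
  intro h
  have := congrFun (congrArg (fun e : Equiv.Perm (Fin n) => (e : Fin n → Fin n)) h)
    (⟨k-1, by omega⟩ : Fin n)
  simp only [Equiv.trans_apply, Equiv.swap_apply_left] at this
  have h2 := σ.injective this
  have := congrArg Fin.val h2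
  simp only [Fin.val_mk] at this
  omega

lemma swap_valid (hv : Valid N b σ) (hSp : Sperner N c) (kF : Fin (n+1))
    (hk0 : 0 < (kF : ℕ)) (hkn : (kF : ℕ) < n)
    (hH : Happy c b σ kF) (hB : ¬ Bottom b σ kF) :
    Valid N b ((Equiv.swap (⟨(kF:ℕ)-1, by omega⟩ : Fin n) ⟨(kF:ℕ), hkn⟩).trans σ) := by
  set k : ℕ := (kF : ℕ) with hkdef
  constructor
  · exact hv.1
  intro m i
  rcases eq_or_ne m k with rfl | hm
  swap
  · rw [vert_swap_ne hk0 hkn hm]; exact hv.2 m i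
  rw [vert_swap_k hk0 hkn]
  set j₁ : Fin n := ⟨k-1, by omega⟩ with hj₁
  set j₂ : Fin n := ⟨k, hkn⟩ with hj₂
  set a := vert b σ (k-1) i with ha
  set m1 := mv (σ j₁) i with hm1
  set m2 := mv (σ j₂) i with hm2
  have h0 : 0 ≤ a := hv.2 _ i
  have hkk : k - 1 + 1 = k := by omega
  have hvk : vert b σ k i = a + m1 := by
    conv_lhs => rw [← hkk]
    rw [vert_succ_of_lt b σ (by omega) i]
  have hvk1 : vert b σ (k+1) i = a + m1 + m2 := by
    rw [vert_succ_of_lt b σ hkn i, hvk]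
  have h1 : 0 ≤ a + m1 := by rw [← hvk]; exact hv.2 _ i
  have h2 : 0 ≤ a + m1 + m2 := by rw [← hvk1]; exact hv.2 _ i
  by_contra hneg
  push_neg at hneg
  -- bad case: m2 = -1, a = 0, m1 = 1
  have hm2v : m2 = -1 := by
    rcases mv_mem (i := σ j₂) (j := i) with h | h | h <;> rw [← hm2] at h <;> omega
  have hav : a = 0 := by omega
  have hm1v : m1 = 1 := by
    rcases mv_mem (i := σ j₁) (j := i) with h | h | h <;> rw [← hm1] at h <;> omega
  have hi1 : i = (σ j₁).castSucc := mv_eq_one_iff.mp hm1v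
  have hi2 : i = (σ j₂).succ := mv_eq_neg_one_iff.mp hm2v
  -- all other vertices vanish at coordinate i
  have hz : ∀ m' : ℕ, m' ≠ k → vert b σ m' i = 0 := by
    have hnotouch : ∀ j : Fin n, j ≠ j₁ → j ≠ j₂ → mv (σ j) i = 0 := by
      intro j hj1 hj2
      by_contra hne
      rcases mv_ne_zero_cases hne with h | h
      · exact hj1 (σ.injective (Fin.castSucc_injective n (hi1.symm.trans h))).symm
      · exact hj2 (σ.injective (Fin.succ_injective n (hi2.symm.trans h))).symm
    intro m' hm'
    rcases lt_or_gt_of_ne hm' with hlt | hgt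
    · have hb0 : vert b σ m' i = vert b σ 0 i := by
        apply vert_flat b σ (Nat.zero_le _) i
        intro j _ hj
        refine hnotouch j ?_ ?_ <;> intro h <;> rw [h] at hj <;> simp [hj₁, hj₂] at hj <;> omega
      have hbk : vert b σ (k-1) i = vert b σ 0 i := by
        apply vert_flat b σ (Nat.zero_le _) i
        intro j _ hj
        refine hnotouch j ?_ ?_ <;> intro h <;> rw [h] at hj <;> simp [hj₁, hj₂] at hj <;> omega
      rw [hb0, ← hbk, ← ha, hav]
    · have : vert b σ m' i = vert b σ (k+1) i := by
        apply vert_flat b σ (by omega) i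
        intro j hj1 hj2
        refine hnotouch j ?_ ?_ <;> intro h <;> rw [h] at hj1 <;> simp [hj₁, hj₂] at hj1 <;> omega
      rw [this, hvk1, hav, hm1v, hm2v]; ring
  -- now derive contradiction
  rcases eq_or_ne i (Fin.last n) with hlast | hlast
  · apply hB
    intro j
    rw [← hlast]
    apply hz
    intro h
    exact Fin.succAbove_ne kF j (Fin.ext h)
  · have himem : i ∈ univ.erase (Fin.last n) := by simp [hlast]
    rw [← hH] at himem
    obtain ⟨j, _, hj⟩ := Finset.mem_image.mp himem
    have hlat := valid_lattice hv ((kF.succAbove j : Fin (n+1)) : ℕ)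
    have hsp := hSp _ hlat.1 hlat.2
    rw [hj] at hsp
    have := hz ((kF.succAbove j : Fin (n+1)) : ℕ) (fun h => Fin.succAbove_ne kF j (Fin.ext h))
    omega

lemma swap_facet_vert (kF : Fin (n+1)) (hk0 : 0 < (kF : ℕ)) (hkn : (kF : ℕ) < n) (j : Fin n) :
    vert b ((Equiv.swap (⟨(kF:ℕ)-1, by omega⟩ : Fin n) ⟨(kF:ℕ), hkn⟩).trans σ)
        ((kF.succAbove j : Fin (n+1)) : ℕ)
      = vert b σ ((kF.succAbove j : Fin (n+1)) : ℕ) := by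
  funext i
  exact vert_swap_ne hk0 hkn (fun h => Fin.succAbove_ne kF j (Fin.ext h)) i

lemma swap_happy_iff (kF : Fin (n+1)) (hk0 : 0 < (kF : ℕ)) (hkn : (kF : ℕ) < n) :
    Happy c b ((Equiv.swap (⟨(kF:ℕ)-1, by omega⟩ : Fin n) ⟨(kF:ℕ), hkn⟩).trans σ) kF
      ↔ Happy c b σ kF := by
  unfold Happy
  rw [Finset.image_congr (fun j _ => by rw [swap_facet_vert kF hk0 hkn j])]

lemma swap_bottom_iff (kF : Fin (n+1)) (hk0 : 0 < (kF : ℕ)) (hkn : (kF : ℕ) < n) :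
    Bottom b ((Equiv.swap (⟨(kF:ℕ)-1, by omega⟩ : Fin n) ⟨(kF:ℕ), hkn⟩).trans σ) kF
      ↔ Bottom b σ kF := by
  unfold Bottom
  exact forall_congr' fun j => by rw [swap_facet_vert kF hk0 hkn j]

end Middle

section Rotation

variable {N : ℕ} {c : (Fin (n+2) → ℤ) → Fin (n+2)} {b : Fin (n+2) → ℤ} {σ : Equiv.Perm (Fin (n+1))}

lemma rho_mk {m : ℕ} (h : m < n) :
    finRotate (n+1) ⟨m, by omega⟩ = (⟨m+1, by omega⟩ : Fin (n+1)) := by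
  rw [finRotate_succ_apply]
  apply Fin.ext
  simp [Fin.val_add, Fin.val_one']
  omega

lemma rho_symm_zero : (finRotate (n+1)).symm 0 = Fin.last n := by
  rw [Equiv.symm_apply_eq, finRotate_last]

lemma rho_symm_mk {m : ℕ} (h : m < n) :
    (finRotate (n+1)).symm ⟨m+1, by omega⟩ = (⟨m, by omega⟩ : Fin (n+1)) := by
  rw [Equiv.symm_apply_eq, rho_mk h]

lemma mk_zero_eq : (⟨0, Nat.succ_pos n⟩ : Fin (n+1)) = 0 := Fin.mk_zero

/-- Vertices of the rotated cell (case `k = 0`). -/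
lemma rot_vert {m : ℕ} (hm : m ≤ n) (i : Fin (n+2)) :
    vert (fun i' => b i' + mv (σ 0) i') ((finRotate (n+1)).trans σ) m i
      = vert b σ (m+1) i := by
  induction m with
  | zero =>
    rw [vert_zero, vert_succ_of_lt b σ (Nat.succ_pos n) i, vert_zero, Fin.mk_zero]
  | succ m ih =>
    have hm' : m < n + 1 := by omega
    rw [vert_succ_of_lt _ _ hm' i, vert_succ_of_lt b σ (by omega : m + 1 < n + 1) i,
      ih (by omega)]
    congr 2
    rw [Equiv.trans_apply]
    congr 1
    exact rho_mk (by omega)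

lemma rot_vert_top (i : Fin (n+2)) :
    vert (fun i' => b i' + mv (σ 0) i') ((finRotate (n+1)).trans σ) (n+1) i
      = vert b σ (n+1) i + mv (σ 0) i := by
  unfold vert
  have huniv : (univ.filter (fun j : Fin (n+1) => (j : ℕ) < n+1)) = univ := by
    apply Finset.filter_true_of_mem; intro j _; exact j.isLt
  rw [huniv]
  have : ∑ j : Fin (n+1), mv (((finRotate (n+1)).trans σ) j) i = ∑ j : Fin (n+1), mv (σ j) i :=
    Equiv.sum_comp (finRotate (n+1)) (fun j => mv (σ j) i)
  rw [this]
  ring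

lemma rot_valid (hv : Valid N b σ) (hB : ¬ Bottom b σ 0) :
    Valid N (fun i' => b i' + mv (σ 0) i') ((finRotate (n+1)).trans σ) := by
  constructor
  · rw [Finset.sum_add_distrib, sum_mv, hv.1]; ring
  intro m i
  rcases le_or_gt m n with hm | hm
  · rw [rot_vert hm]; exact hv.2 _ i
  have hred : vert (fun i' => b i' + mv (σ 0) i') ((finRotate (n+1)).trans σ) m i
      = vert b σ (n+1) i + mv (σ 0) i := by
    rw [vert_of_le _ _ (by omega) i, rot_vert_top]
  rw [hred]
  by_contra hneg
  push_neg at hneg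
  have hmv : mv (σ 0) i = -1 := by
    rcases mv_mem (i := σ 0) (j := i) with h | h | h <;> [skip; skip; skip] <;>
      (try omega) <;> (have := hv.2 (n+1) i; omega)
  have hvtop : vert b σ (n+1) i = 0 := by
    have := hv.2 (n+1) i; omega
  have hi : i = (σ 0).succ := mv_eq_neg_one_iff.mp hmv
  rcases eq_or_ne i (Fin.last (n+1)) with hlast | hlast
  · -- facet of k = 0 lies in the bottom face : contradiction with hB
    apply hB
    intro j
    have hval : (((0 : Fin (n+2)).succAbove j : Fin (n+2)) : ℕ) = (j : ℕ) + 1 := by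
      rw [Fin.zero_succAbove]; simp
    rw [hval, ← hlast]
    have hnotouch : ∀ j' : Fin (n+1), 1 ≤ (j' : ℕ) → mv (σ j') i = 0 := by
      intro j' hj'
      by_contra hne
      rcases mv_ne_zero_cases hne with h | h
      · rw [hlast] at h
        exact absurd h.symm (Fin.castSucc_lt_last (σ j')).ne
      · have : σ j' = σ 0 := Fin.succ_injective _ (h.symm.trans hi)
        have := σ.injective this
        rw [this] at hj'; simp at hj'
    have h1 : vert b σ ((j:ℕ)+1) i = vert b σ 1 i :=
      vert_flat b σ (by omega) i (fun j' h1 h2 => hnotouch j' h1)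
    have h2 : vert b σ (n+1) i = vert b σ 1 i :=
      vert_flat b σ (by omega) i (fun j' h1 h2 => hnotouch j' h1)
    rw [h1, ← h2, hvtop]
  · obtain ⟨m₀, hm₀⟩ := Fin.exists_castSucc_eq.mpr hlast
    set q := σ.symm m₀ with hq
    have hσq : σ q = m₀ := σ.apply_symm_apply m₀
    have hqne : q ≠ 0 := by
      intro h
      rw [h] at hσq
      rw [← hσq] at hm₀
      rw [hi] at hm₀
      exact absurd hm₀.symm (Fin.castSucc_lt_succ (i := σ 0)).ne'
    have hnotouch : ∀ j' : Fin (n+1), j' ≠ 0 → j' ≠ q → mv (σ j') i = 0 := by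
      intro j' h0' hq'
      by_contra hne
      rcases mv_ne_zero_cases hne with h | h
      · have : σ j' = m₀ := Fin.castSucc_injective _ ((hm₀.trans h).symm)
        exact hq' (by rw [hq, ← this, Equiv.symm_apply_apply])
      · exact h0' (σ.injective (Fin.succ_injective _ (h.symm.trans hi)))
    have hb1 : vert b σ 1 i = b i - 1 := by
      rw [vert_succ_of_lt b σ (Nat.succ_pos n) i, vert_zero, mk_zero_eq, hmv]; ring
    have hq1 : vert b σ (q : ℕ) i = b i - 1 := by
      rw [← hb1]
      apply vert_flat b σ (by have := Fin.pos_iff_ne_zero.mpr hqne; omega) i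
      intro j' h1 h2
      refine hnotouch j' ?_ ?_
      · intro h; rw [h] at h1; simp at h1
      · intro h; rw [h] at h2; omega
    have hq2 : vert b σ ((q : ℕ)+1) i = b i := by
      rw [vert_succ_of_lt b σ q.isLt i]
      have : (⟨(q:ℕ), q.isLt⟩ : Fin (n+1)) = q := Fin.ext rfl
      rw [this, hq1]
      have : mv (σ q) i = 1 := mv_eq_one_iff.mpr (by rw [hσq, hm₀])
      rw [this]; ring
    have htop : vert b σ (n+1) i = b i := by
      rw [← hq2]
      apply vert_flat b σ (by omega) i
      intro j' h1 h2
      refine hnotouch j' ?_ ?_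
      · intro h; rw [h] at h1; simp at h1
      · intro h; rw [h] at h1; omega
    have hb0 : 0 ≤ vert b σ 1 i := hv.2 1 i
    rw [hb1] at hb0
    rw [htop] at hvtop
    omega

lemma rot_facet (j : Fin (n+1)) :
    vert (fun i' => b i' + mv (σ 0) i') ((finRotate (n+1)).trans σ)
        (((Fin.last (n+1)).succAbove j : Fin (n+2)) : ℕ)
      = vert b σ (((0 : Fin (n+2)).succAbove j : Fin (n+2)) : ℕ) := by
  funext i
  have h1 : (((Fin.last (n+1)).succAbove j : Fin (n+2)) : ℕ) = (j : ℕ) := by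
    rw [Fin.succAbove_last]; simp
  have h2 : (((0 : Fin (n+2)).succAbove j : Fin (n+2)) : ℕ) = (j : ℕ) + 1 := by
    rw [Fin.zero_succAbove]; simp
  rw [h1, h2, rot_vert (by omega : (j:ℕ) ≤ n)]

lemma rot_happy_iff :
    Happy c (fun i' => b i' + mv (σ 0) i') ((finRotate (n+1)).trans σ) (Fin.last (n+1))
      ↔ Happy c b σ 0 := by
  unfold Happy
  rw [Finset.image_congr (fun j _ => by rw [rot_facet j])]

lemma rot_bottom_iff :
    Bottom (fun i' => b i' + mv (σ 0) i') ((finRotate (n+1)).trans σ) (Fin.last (n+1))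
      ↔ Bottom b σ 0 := by
  unfold Bottom
  exact forall_congr' fun j => by rw [rot_facet j]

end Rotation

section RotationInv

variable {N : ℕ} {c : (Fin (n+2) → ℤ) → Fin (n+2)} {b : Fin (n+2) → ℤ} {σ : Equiv.Perm (Fin (n+1))}

/-- Vertices of the inverse-rotated cell (case `k = last`). -/
lemma rotinv_vert {m : ℕ} (hm : m ≤ n) (i : Fin (n+2)) :
    vert (fun i' => b i' - mv (σ (Fin.last n)) i') ((finRotate (n+1)).symm.trans σ) (m+1) i
      = vert b σ m i := by
  induction m with
  | zero =>
    rw [vert_succ_of_lt _ _ (Nat.succ_pos n) i, vert_zero, vert_zero]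
    rw [Equiv.trans_apply, Fin.mk_zero, rho_symm_zero]
    ring
  | succ m ih =>
    rw [vert_succ_of_lt _ _ (by omega : m + 1 < n + 1) i,
      vert_succ_of_lt b σ (by omega : m < n + 1) i, ih (by omega)]
    congr 2
    rw [Equiv.trans_apply]
    congr 1
    exact rho_symm_mk (by omega)

lemma rotinv_valid (hv : Valid N b σ) (hSp : Sperner N c)
    (hH : Happy c b σ (Fin.last (n+1))) :
    Valid N (fun i' => b i' - mv (σ (Fin.last n)) i') ((finRotate (n+1)).symm.trans σ) := by
  constructor
  · rw [Finset.sum_sub_distrib, sum_mv, hv.1]; ring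
  intro m i
  rcases Nat.eq_zero_or_pos m with rfl | hm
  swap
  · obtain ⟨m', rfl⟩ : ∃ m', m = m' + 1 := ⟨m - 1, by omega⟩
    rcases le_or_gt m' n with hm' | hm'
    · rw [rotinv_vert hm']; exact hv.2 _ i
    · rw [vert_of_le _ _ (by omega) i]
      have : (n + 1 : ℕ) = n + 1 := rfl
      rw [rotinv_vert (le_refl n)]
      exact hv.2 _ i
  rw [vert_zero]
  by_contra hneg
  push_neg at hneg
  have hb0 : 0 ≤ b i := by
    have := hv.2 0 i; rwa [vert_zero] at this
  have hmv : mv (σ (Fin.last n)) i = 1 := by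
    rcases mv_mem (i := σ (Fin.last n)) (j := i) with h | h | h <;> omega
  have hbz : b i = 0 := by omega
  have hi : i = (σ (Fin.last n)).castSucc := mv_eq_one_iff.mp hmv
  rcases Fin.eq_zero_or_eq_succ i with hz | ⟨m₁, hm₁⟩
  swap
  · -- a decreasing move for coordinate i sits below position `last`: contradiction
    set q := σ.symm m₁ with hq
    have hσq : σ q = m₁ := σ.apply_symm_apply m₁
    have hqne : q ≠ Fin.last n := by
      intro h
      rw [h] at hσq
      rw [← hσq] at hm₁
      rw [hi] at hm₁
      exact absurd hm₁ (Fin.castSucc_lt_succ (i := σ (Fin.last n))).ne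
    have hqlt : (q : ℕ) < n := by
      have := q.isLt
      have : (q : ℕ) ≠ n := fun h => hqne (Fin.ext (by simp [h]))
      omega
    have hnotouch : ∀ j' : Fin (n+1), (j' : ℕ) < (q : ℕ) → mv (σ j') i = 0 := by
      intro j' hj'
      by_contra hne
      rcases mv_ne_zero_cases hne with h | h
      · have : σ j' = σ (Fin.last n) :=
          Fin.castSucc_injective _ (h.symm.trans hi)
        have := σ.injective this
        rw [this] at hj'; simp at hj'; omega
      · have : σ j' = m₁ := Fin.succ_injective _ (h.symm.trans hm₁)
        have hj'q : j' = q := by rw [hq, ← this, Equiv.symm_apply_apply]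
        rw [hj'q] at hj'; omega
    have hflat : vert b σ (q : ℕ) i = b i :=
      (vert_zero b σ i) ▸ vert_flat b σ (Nat.zero_le _) i (fun j' _ h2 => hnotouch j' h2)
    have hstep : vert b σ ((q : ℕ) + 1) i = b i - 1 := by
      rw [vert_succ_of_lt b σ q.isLt i]
      have hqmk : (⟨(q:ℕ), q.isLt⟩ : Fin (n+1)) = q := Fin.ext rfl
      rw [hqmk, hflat]
      have : mv (σ q) i = -1 := mv_eq_neg_one_iff.mpr (by rw [hσq, ← hm₁])
      rw [this]; ring
    have := hv.2 ((q : ℕ) + 1) i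
    omega
  · -- i = 0 : the facet at `last` lies in the face x₀ = 0, contradicting happiness
    have hfacet : ∀ j : Fin (n+1),
        vert b σ (((Fin.last (n+1)).succAbove j : Fin (n+2)) : ℕ) i = 0 := by
      intro j
      have hval : (((Fin.last (n+1)).succAbove j : Fin (n+2)) : ℕ) = (j : ℕ) := by
        rw [Fin.succAbove_last]; simp
      rw [hval]
      have hnotouch : ∀ j' : Fin (n+1), (j' : ℕ) < (j : ℕ) → mv (σ j') i = 0 := by
        intro j' hj'
        by_contra hne
        rcases mv_ne_zero_cases hne with h | h
        · have : σ j' = σ (Fin.last n) :=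
            Fin.castSucc_injective _ (h.symm.trans hi)
          have := σ.injective this
          rw [this] at hj'
          simp at hj'
          have := j.isLt; omega
        · rw [hz] at h
          exact (Fin.succ_ne_zero _) h.symm
      have := vert_flat b σ (Nat.zero_le (j : ℕ)) i (fun j' _ h2 => hnotouch j' h2)
      rw [this, vert_zero, hbz]
    have h0mem : (0 : Fin (n+2)) ∈ univ.erase (Fin.last (n+1)) := by
      simp [(Fin.last_pos (n := n+1)).ne']
    rw [← hH] at h0mem
    obtain ⟨j, _, hj⟩ := Finset.mem_image.mp h0mem
    have hlat := valid_lattice hv (((Fin.last (n+1)).succAbove j : Fin (n+2)) : ℕ)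
    have hsp := hSp _ hlat.1 hlat.2
    rw [hj, ← hz] at hsp
    have := hfacet j
    omega

lemma rotinv_facet (j : Fin (n+1)) :
    vert (fun i' => b i' - mv (σ (Fin.last n)) i') ((finRotate (n+1)).symm.trans σ)
        (((0 : Fin (n+2)).succAbove j : Fin (n+2)) : ℕ)
      = vert b σ (((Fin.last (n+1)).succAbove j : Fin (n+2)) : ℕ) := by
  funext i
  have h1 : (((0 : Fin (n+2)).succAbove j : Fin (n+2)) : ℕ) = (j : ℕ) + 1 := by
    rw [Fin.zero_succAbove]; simp
  have h2 : (((Fin.last (n+1)).succAbove j : Fin (n+2)) : ℕ) = (j : ℕ) := by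
    rw [Fin.succAbove_last]; simp
  rw [h1, h2, rotinv_vert (by omega : (j:ℕ) ≤ n)]

lemma rotinv_happy_iff :
    Happy c (fun i' => b i' - mv (σ (Fin.last n)) i') ((finRotate (n+1)).symm.trans σ) 0
      ↔ Happy c b σ (Fin.last (n+1)) := by
  unfold Happy
  rw [Finset.image_congr (fun j _ => by rw [rotinv_facet j])]

lemma rotinv_bottom_iff :
    Bottom (fun i' => b i' - mv (σ (Fin.last n)) i') ((finRotate (n+1)).symm.trans σ) 0
      ↔ Bottom b σ (Fin.last (n+1)) := by
  unfold Bottom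
  exact forall_congr' fun j => by rw [rotinv_facet j]

end RotationInv

section Lift

variable {N : ℕ} {c : (Fin (n+2) → ℤ) → Fin (n+2)}

/-- Any valid cell has base with last coordinate ≥ 1 (provided N ≥ 1). -/
lemma base_last_pos {n N : ℕ} (hN : 1 ≤ N) {b : Fin (n+1) → ℤ} {σ : Equiv.Perm (Fin n)}
    (hv : Valid N b σ) : 1 ≤ b (Fin.last n) := by
  cases n with
  | zero =>
    have := hv.1
    rw [Fin.sum_univ_one] at this
    have : b (Fin.last 0) = (N : ℤ) := this
    omega
  | succ m =>
    set p := σ.symm (Fin.last m) with hp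
    have hσp : σ p = Fin.last m := σ.apply_symm_apply _
    have hnotouch : ∀ j' : Fin (m+1), (j' : ℕ) < (p : ℕ) → mv (σ j') (Fin.last (m+1)) = 0 := by
      intro j' hj'
      by_contra hne
      rcases mv_ne_zero_cases hne with h | h
      · exact absurd h.symm (Fin.castSucc_lt_last (σ j')).ne
      · have : σ j' = Fin.last m := Fin.succ_injective _ (by rw [← h, Fin.succ_last])
        have : j' = p := by rw [hp, ← this, Equiv.symm_apply_apply]
        rw [this] at hj'; omega
    have hflat : vert b σ (p : ℕ) (Fin.last (m+1)) = b (Fin.last (m+1)) :=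
      (vert_zero b σ _) ▸ vert_flat b σ (Nat.zero_le _) _ (fun j' _ h2 => hnotouch j' h2)
    have hstep : vert b σ ((p : ℕ) + 1) (Fin.last (m+1)) = b (Fin.last (m+1)) - 1 := by
      rw [vert_succ_of_lt b σ p.isLt _]
      have hqmk : (⟨(p : ℕ), p.isLt⟩ : Fin (m+1)) = p := Fin.ext rfl
      rw [hqmk, hflat]
      have : mv (σ p) (Fin.last (m+1)) = -1 :=
        mv_eq_neg_one_iff.mpr (by rw [hσp, Fin.succ_last])
      rw [this]; ring
    have := hv.2 ((p : ℕ) + 1) (Fin.last (m+1))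
    omega

/-- A bottom facet forces `k = 0`, `σ 0 = last`, `b last = 1`. -/
lemma bottom_char (hN : 1 ≤ N) {b : Fin (n+2) → ℤ} {σ : Equiv.Perm (Fin (n+1))}
    (hv : Valid N b σ) {k : Fin (n+2)} (hB : Bottom b σ k) :
    k = 0 ∧ σ 0 = Fin.last n ∧ b (Fin.last (n+1)) = 1 := by
  set L := Fin.last (n+1) with hL
  set p := σ.symm (Fin.last n) with hp
  have hσp : σ p = Fin.last n := σ.apply_symm_apply _
  have hbL : 1 ≤ b L := base_last_pos hN hv
  have hnotouch : ∀ j' : Fin (n+1), j' ≠ p → mv (σ j') L = 0 := by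
    intro j' hj'
    by_contra hne
    rcases mv_ne_zero_cases hne with h | h
    · exact absurd h.symm (Fin.castSucc_lt_last (σ j')).ne
    · have : σ j' = Fin.last n := Fin.succ_injective _ (by rw [← h, hL, Fin.succ_last])
      exact hj' (by rw [hp, ← this, Equiv.symm_apply_apply])
  have hflat : ∀ m : ℕ, m ≤ (p : ℕ) → vert b σ m L = b L := by
    intro m hm
    rw [vert_flat b σ (Nat.zero_le m) L
      (fun j' _ h2 => hnotouch j' (fun h => by rw [h] at h2; omega)), vert_zero]
  have hk0 : k = 0 := by
    by_contra hk
    obtain ⟨j, hj⟩ := Fin.exists_succAbove_eq (Ne.symm hk)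
    have := hB j
    rw [hj] at this
    have h0 : ((0 : Fin (n+2)) : ℕ) = 0 := rfl
    rw [h0, hflat 0 (Nat.zero_le _)] at this
    omega
  subst hk0
  have h1val : (((0 : Fin (n+2)).succAbove 0 : Fin (n+2)) : ℕ) = 1 := by
    rw [Fin.zero_succAbove]; rfl
  have hB0 := hB 0
  rw [h1val] at hB0
  have hp0 : p = 0 := by
    by_contra hpne
    have : 1 ≤ (p : ℕ) := by
      have := Fin.pos_iff_ne_zero.mpr hpne; omega
    rw [hflat 1 this] at hB0
    omega
  have hσ0 : σ 0 = Fin.last n := by rw [← hp0, hσp]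
  refine ⟨rfl, hσ0, ?_⟩
  have hstep : vert b σ 1 L = b L - 1 := by
    rw [vert_succ_of_lt b σ (Nat.succ_pos n) L, vert_zero, Fin.mk_zero]
    have : mv (σ 0) L = -1 := mv_eq_neg_one_iff.mpr (by rw [hσ0, hL, Fin.succ_last])
    rw [this]; ring
  rw [hstep] at hB0
  omega

/-- Extend a vector by a zero last coordinate. -/
def up (x : Fin (n+1) → ℤ) : Fin (n+2) → ℤ :=
  fun i => if h : i = Fin.last (n+1) then 0 else x (i.castPred h)

def down (x : Fin (n+2) → ℤ) : Fin (n+1) → ℤ := fun i => x i.castSucc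

lemma up_castSucc (x : Fin (n+1) → ℤ) (i : Fin (n+1)) : up x i.castSucc = x i := by
  rw [up, dif_neg (Fin.castSucc_lt_last i).ne, Fin.castPred_castSucc]

lemma up_last (x : Fin (n+1) → ℤ) : up x (Fin.last (n+1)) = 0 := by
  rw [up, dif_pos rfl]

lemma down_up (x : Fin (n+1) → ℤ) : down (up x) = x :=
  funext fun i => up_castSucc x i

lemma up_down {x : Fin (n+2) → ℤ} (h : x (Fin.last (n+1)) = 0) : up (down x) = x := by
  funext i
  rcases eq_or_ne i (Fin.last (n+1)) with rfl | hi
  · rw [up_last, h]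
  · obtain ⟨i', rfl⟩ := Fin.exists_castSucc_eq.mpr hi
    rw [up_castSucc, down]

lemma sum_up (x : Fin (n+1) → ℤ) : ∑ i, up x i = ∑ i, x i := by
  rw [Fin.sum_univ_castSucc (f := up x), up_last]
  simp [up_castSucc]

lemma mv_up (m' : Fin n) (i' : Fin (n+1)) :
    mv (m'.castSucc) (i'.castSucc) = mv m' i' := by
  unfold mv
  rw [Fin.succ_castSucc]
  simp only [Fin.castSucc_inj]

lemma mv_up_last (m' : Fin n) : mv (m'.castSucc) (Fin.last (n+1)) = 0 := by
  apply mv_eq_zero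
  · exact (Fin.castSucc_lt_last _).ne'
  · rw [Fin.succ_castSucc]
    exact (Fin.castSucc_lt_last _).ne'

lemma rho_castSucc (x : Fin (n+1)) : finRotate (n+2) x.castSucc = x.succ := by
  rw [finRotate_succ_apply]
  apply Fin.ext
  simp [Fin.val_add, Fin.val_one']

/-- Lift of a permutation : position 0 gets move `last`, position `j+1` gets `castSucc (τ j)`. -/
def liftPerm (τ : Equiv.Perm (Fin n)) : Equiv.Perm (Fin (n+1)) :=
  (Equiv.Perm.decomposeFin.symm (0, τ)).trans (finRotate (n+1)).symm

def delift (σ : Equiv.Perm (Fin (n+1))) : Equiv.Perm (Fin n) :=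
  (Equiv.Perm.decomposeFin (σ.trans (finRotate (n+1)))).2

lemma liftPerm_zero (τ : Equiv.Perm (Fin n)) : liftPerm τ 0 = Fin.last n := by
  rw [liftPerm, Equiv.trans_apply, Equiv.Perm.decomposeFin_symm_apply_zero, rho_symm_zero]

lemma liftPerm_succ (τ : Equiv.Perm (Fin n)) (j : Fin n) :
    liftPerm τ j.succ = (τ j).castSucc := by
  rw [liftPerm, Equiv.trans_apply, Equiv.Perm.decomposeFin_symm_apply_succ]
  rw [Equiv.swap_self]
  rw [Equiv.symm_apply_eq]
  cases n with
  | zero => exact absurd j.isLt (by omega)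
  | succ m => rw [Equiv.refl_apply, rho_castSucc]

lemma delift_lift (τ : Equiv.Perm (Fin n)) : delift (liftPerm τ) = τ := by
  rw [delift, liftPerm, Equiv.trans_assoc, Equiv.symm_trans_self, Equiv.trans_refl,
    Equiv.apply_symm_apply]

lemma lift_delift {σ : Equiv.Perm (Fin (n+1))} (h : σ 0 = Fin.last n) :
    liftPerm (delift σ) = σ := by
  have hπ0 : (σ.trans (finRotate (n+1))) 0 = 0 := by
    rw [Equiv.trans_apply, h, finRotate_last]
  have hfst : (Equiv.Perm.decomposeFin (σ.trans (finRotate (n+1)))).1 = 0 := by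
    have := Equiv.Perm.decomposeFin_symm_apply_zero
      (Equiv.Perm.decomposeFin (σ.trans (finRotate (n+1)))).1
      (Equiv.Perm.decomposeFin (σ.trans (finRotate (n+1)))).2
    rw [Prod.mk.eta, Equiv.symm_apply_apply] at this
    rw [← this, hπ0]
  have : Equiv.Perm.decomposeFin.symm (0, delift σ) = σ.trans (finRotate (n+1)) := by
    rw [delift, ← hfst, Prod.mk.eta, Equiv.symm_apply_apply]
  rw [liftPerm, delift] at *
  rw [this, Equiv.trans_assoc, Equiv.self_trans_symm, Equiv.trans_refl]

end Lift

section Lift2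

variable {N : ℕ} {c : (Fin (n+2) → ℤ) → Fin (n+2)}
  {bb : Fin (n+1) → ℤ} {τ : Equiv.Perm (Fin n)}

lemma lift_vert {j : ℕ} (hj : j ≤ n) (i : Fin (n+2)) :
    vert (fun i' => up bb i' - mv (Fin.last n) i') (liftPerm τ) (j+1) i
      = up (vert bb τ j) i := by
  induction j with
  | zero =>
    rw [vert_succ_of_lt _ _ (Nat.succ_pos n) i, vert_zero, Fin.mk_zero, liftPerm_zero]
    have : up (vert bb τ 0) i = up bb i := by
      unfold up
      split
      · rfl
      · rw [vert_zero]
    rw [this]; ring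
  | succ j ih =>
    have hjn : j < n := by omega
    rw [vert_succ_of_lt _ _ (by omega : j + 1 < n + 1) i, ih (by omega)]
    have hmk : (⟨j+1, by omega⟩ : Fin (n+1)) = (⟨j, hjn⟩ : Fin n).succ := rfl
    rw [hmk, liftPerm_succ]
    rcases eq_or_ne i (Fin.last (n+1)) with rfl | hi
    · rw [up_last, up_last, mv_up_last]; ring
    · obtain ⟨i', rfl⟩ := Fin.exists_castSucc_eq.mpr hi
      rw [up_castSucc, up_castSucc, mv_up, vert_succ_of_lt bb τ hjn i']

lemma lift_valid (hN : 1 ≤ N) (hvl : Valid N bb τ) :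
    Valid N (fun i' => up bb i' - mv (Fin.last n) i') (liftPerm τ) := by
  constructor
  · rw [Finset.sum_sub_distrib, sum_mv, sum_up, hvl.1]; ring
  intro m i
  rcases Nat.eq_zero_or_pos m with rfl | hm
  · rw [vert_zero]
    rcases eq_or_ne i (Fin.last (n+1)) with rfl | hi
    · rw [up_last]
      have : mv (Fin.last n) (Fin.last (n+1)) = -1 :=
        mv_eq_neg_one_iff.mpr (Fin.succ_last n).symm
      rw [this]; omega
    · obtain ⟨i', rfl⟩ := Fin.exists_castSucc_eq.mpr hi
      rw [up_castSucc]
      rcases eq_or_ne i' (Fin.last n) with rfl | hi'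
      · have hmv : mv (Fin.last n) ((Fin.last n).castSucc) = 1 := mv_eq_one_iff.mpr rfl
        rw [hmv]
        have := base_last_pos hN hvl
        omega
      · have hmv : mv (Fin.last n) (i'.castSucc) = 0 := by
          apply mv_eq_zero
          · rwa [Ne, Fin.castSucc_inj]
          · rw [Fin.succ_last]
            exact (Fin.castSucc_lt_last i').ne
        rw [hmv]
        have := hvl.2 0 i'
        rw [vert_zero] at this
        omega
  · obtain ⟨j, rfl⟩ : ∃ j, m = j + 1 := ⟨m - 1, by omega⟩
    rcases le_or_gt j n with hj | hj
    · rw [lift_vert hj]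
      rcases eq_or_ne i (Fin.last (n+1)) with rfl | hi
      · rw [up_last]
      · obtain ⟨i', rfl⟩ := Fin.exists_castSucc_eq.mpr hi
        rw [up_castSucc]; exact hvl.2 j i'
    · rw [vert_of_le _ _ (by omega) i, lift_vert (le_refl n)]
      rcases eq_or_ne i (Fin.last (n+1)) with rfl | hi
      · rw [up_last]
      · obtain ⟨i', rfl⟩ := Fin.exists_castSucc_eq.mpr hi
        rw [up_castSucc]; exact hvl.2 n i'

lemma lift_bottom : Bottom (fun i' => up bb i' - mv (Fin.last n) i') (liftPerm τ) 0 := by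
  intro j
  have hval : (((0 : Fin (n+2)).succAbove j : Fin (n+2)) : ℕ) = (j : ℕ) + 1 := by
    rw [Fin.zero_succAbove]; simp
  rw [hval, lift_vert (by omega : (j:ℕ) ≤ n), up_last]

/-- The induced coloring one dimension down. -/
noncomputable def lowc (c : (Fin (n+2) → ℤ) → Fin (n+2)) : (Fin (n+1) → ℤ) → Fin (n+1) :=
  fun x => if h : c (up x) = Fin.last (n+1) then 0 else (c (up x)).castPred h

lemma lowc_sperner (hSp : Sperner N c) : Sperner N (lowc c) := by
  intro x hx hsum
  have hup : ∀ i, 0 ≤ up x i := by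
    intro i
    unfold up
    split
    · exact le_refl 0
    · exact hx _
  have hsum' : ∑ i, up x i = (N : ℤ) := by rw [sum_up]; exact hsum
  have h := hSp (up x) hup hsum'
  have hne : c (up x) ≠ Fin.last (n+1) := by
    intro hc
    rw [hc, up_last] at h
    omega
  simp only [lowc]
  rw [dif_neg hne]
  have hcast := Fin.castSucc_castPred (c (up x)) hne
  rw [← hcast, up_castSucc] at h
  exact h

lemma happy_iff_rainbow (hSp : Sperner N c) (hvl : Valid N bb τ) :
    Happy c (fun i' => up bb i' - mv (Fin.last n) i') (liftPerm τ) 0 ↔ Rainbow (lowc c) bb τ := by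
  have hvertex : ∀ j : Fin (n+1),
      vert (fun i' => up bb i' - mv (Fin.last n) i') (liftPerm τ)
        (((0 : Fin (n+2)).succAbove j : Fin (n+2)) : ℕ) = up (vert bb τ (j : ℕ)) := by
    intro j
    funext i
    have hval : (((0 : Fin (n+2)).succAbove j : Fin (n+2)) : ℕ) = (j : ℕ) + 1 := by
      rw [Fin.zero_succAbove]; simp
    rw [hval, lift_vert (by omega : (j : ℕ) ≤ n)]
  have hGne : ∀ j : Fin (n+1), c (up (vert bb τ (j : ℕ))) ≠ Fin.last (n+1) := by
    intro j hc
    have hlat := valid_lattice hvl (j : ℕ)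
    have hupn : ∀ i, 0 ≤ up (vert bb τ (j:ℕ)) i := by
      intro i; unfold up; split
      · exact le_refl 0
      · exact hlat.1 _
    have hsum' : ∑ i, up (vert bb τ (j:ℕ)) i = (N:ℤ) := by rw [sum_up]; exact hlat.2
    have h := hSp _ hupn hsum'
    rw [hc, up_last] at h
    omega
  have hlowc : ∀ j : Fin (n+1),
      lowc c (vert bb τ (j : ℕ)) = (c (up (vert bb τ (j : ℕ)))).castPred (hGne j) := by
    intro j
    simp only [lowc]
    rw [dif_neg (hGne j)]
  unfold Happy Rainbow
  constructor
  · intro h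
    apply Finset.eq_univ_of_forall
    intro i'
    rw [Finset.mem_image]
    have hmem : (i'.castSucc : Fin (n+2)) ∈ univ.erase (Fin.last (n+1)) := by
      simp [(Fin.castSucc_lt_last i').ne]
    rw [← h] at hmem
    obtain ⟨j, _, hj⟩ := Finset.mem_image.mp hmem
    refine ⟨j, mem_univ j, ?_⟩
    rw [hlowc j]
    rw [hvertex j] at hj
    apply Fin.castSucc_injective
    rw [Fin.castSucc_castPred, hj]
  · intro h
    apply Finset.Subset.antisymm
    · intro y hy
      obtain ⟨j, _, rfl⟩ := Finset.mem_image.mp hy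
      rw [Finset.mem_erase]
      refine ⟨?_, mem_univ _⟩
      rw [hvertex j]
      exact hGne j
    · intro y hy
      rw [Finset.mem_erase] at hy
      obtain ⟨i', hi'⟩ := Fin.exists_castSucc_eq.mpr hy.1
      have hmem : i' ∈ univ.image (fun k : Fin (n+1) => lowc c (vert bb τ (k : ℕ))) := by
        rw [h]; exact mem_univ i'
      obtain ⟨j, _, hj⟩ := Finset.mem_image.mp hmem
      rw [Finset.mem_image]
      refine ⟨j, mem_univ j, ?_⟩
      rw [hvertex j]
      rw [hlowc j] at hj
      rw [← hi', ← hj, Fin.castSucc_castPred]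

lemma unlift_valid {b : Fin (n+2) → ℤ} {σ : Equiv.Perm (Fin (n+1))}
    (hv : Valid N b σ) (h0 : σ 0 = Fin.last n) (hbl : b (Fin.last (n+1)) = 1) :
    Valid N (down (vert b σ 1)) (delift σ)
      ∧ (fun i' => up (down (vert b σ 1)) i' - mv (Fin.last n) i') = b := by
  have hv1 : ∀ i, vert b σ 1 i = b i + mv (Fin.last n) i := by
    intro i
    rw [vert_succ_of_lt b σ (Nat.succ_pos n) i, vert_zero, Fin.mk_zero, h0]
  have hmvlast : mv (Fin.last n) (Fin.last (n+1)) = -1 :=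
    mv_eq_neg_one_iff.mpr (Fin.succ_last n).symm
  have hlast0 : vert b σ 1 (Fin.last (n+1)) = 0 := by
    rw [hv1, hbl, hmvlast]; ring
  have hupdown : up (down (vert b σ 1)) = vert b σ 1 := up_down hlast0
  have hbase : (fun i' => up (down (vert b σ 1)) i' - mv (Fin.last n) i') = b := by
    funext i
    rw [hupdown, hv1 i]; ring
  refine ⟨?_, hbase⟩
  have hlift : liftPerm (delift σ) = σ := lift_delift h0
  constructor
  · have hsplit : ∑ i', down (vert b σ 1) i'
        = ∑ i, vert b σ 1 i - vert b σ 1 (Fin.last (n+1)) := by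
      rw [Fin.sum_univ_castSucc (f := vert b σ 1)]
      unfold down; ring
    rw [hsplit, hlast0, sum_vert, hv.1]; ring
  · intro m i'
    rcases le_or_gt m n with hm | hm
    · have hlv := lift_vert (bb := down (vert b σ 1)) (τ := delift σ) hm (i'.castSucc)
      rw [hbase, hlift, up_castSucc] at hlv
      rw [← hlv]
      exact hv.2 (m+1) i'.castSucc
    · rw [vert_of_le _ _ (by omega) i']
      have hlv := lift_vert (bb := down (vert b σ 1)) (τ := delift σ) (le_refl n) (i'.castSucc)
      rw [hbase, hlift, up_castSucc] at hlv
      rw [← hlv]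
      exact hv.2 (n+1) i'.castSucc

end Lift2

section Assembly

variable {N : ℕ}

lemma happy_erase {c : (Fin (n+1) → ℤ) → Fin (n+1)} {b σ} (k : Fin (n+1)) :
    Happy c b σ k ↔ (univ.erase k).image (fun m : Fin (n+1) => c (vert b σ (m : ℕ)))
      = univ.erase (Fin.last n) := by
  unfold Happy
  rw [← image_succAbove_univ k, Finset.image_image]
  rfl

lemma sum_happy_eq {c : (Fin (n+1) → ℤ) → Fin (n+1)} (b : Fin (n+1) → ℤ)
    (σ : Equiv.Perm (Fin n)) :
    (∑ k : Fin (n+1), if Happy c b σ k then (1 : ZMod 2) else 0)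
      = if Rainbow c b σ then 1 else 0 := by
  have h2 := parity_happy (fun m : Fin (n+1) => c (vert b σ (m : ℕ)))
  have h1 : (∑ k : Fin (n+1), if Happy c b σ k then (1 : ZMod 2) else 0)
      = ∑ k : Fin (n+1), if (univ.erase k).image
          (fun m : Fin (n+1) => c (vert b σ (m : ℕ))) = univ.erase (Fin.last n)
          then (1 : ZMod 2) else 0 :=
    Finset.sum_congr rfl fun k _ => if_congr (happy_erase k) rfl rfl
  rw [h1, h2]
  exact if_congr Iff.rfl rfl rfl

/-- The adjacent-cell involution on facet pairs. -/
noncomputable def flip (x : ((Fin (n+2) → ℤ) × Equiv.Perm (Fin (n+1))) × Fin (n+2)) :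
    ((Fin (n+2) → ℤ) × Equiv.Perm (Fin (n+1))) × Fin (n+2) :=
  if _h0 : x.2 = 0 then
    ((fun i => x.1.1 i + mv (x.1.2 0) i, (finRotate (n+1)).trans x.1.2), Fin.last (n+1))
  else if hl : x.2 = Fin.last (n+1) then
    ((fun i => x.1.1 i - mv (x.1.2 (Fin.last n)) i, (finRotate (n+1)).symm.trans x.1.2), 0)
  else
    ((x.1.1, (Equiv.swap (⟨(x.2 : ℕ) - 1, by omega⟩ : Fin (n+1))
        ⟨(x.2 : ℕ), by have := Fin.val_lt_last hl; omega⟩).trans x.1.2), x.2)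

variable {c : (Fin (n+2) → ℤ) → Fin (n+2)}

lemma flip_spec (hN : 1 ≤ N) (hSp : Sperner N c)
    (x : ((Fin (n+2) → ℤ) × Equiv.Perm (Fin (n+1))) × Fin (n+2))
    (hmem : x.1 ∈ cells (n+1) N) (hH : Happy c x.1.1 x.1.2 x.2)
    (hB : ¬ Bottom x.1.1 x.1.2 x.2) :
    (flip x).1 ∈ cells (n+1) N ∧ Happy c (flip x).1.1 (flip x).1.2 (flip x).2
      ∧ ¬ Bottom (flip x).1.1 (flip x).1.2 (flip x).2
      ∧ flip (flip x) = x ∧ flip x ≠ x := by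
  obtain ⟨⟨b, σ⟩, k⟩ := x
  simp only at hH hB
  have hv : Valid N b σ := mem_cells.mp hmem
  have hlne0 : (Fin.last (n+1) : Fin (n+2)) ≠ 0 := (Fin.last_pos).ne'
  by_cases h0 : k = 0
  · subst h0
    have hs1 : flip ((b, σ), (0 : Fin (n+2)))
        = ((fun i => b i + mv (σ 0) i, (finRotate (n+1)).trans σ), Fin.last (n+1)) := by
      rw [flip, dif_pos rfl]
    have hs2 : flip ((fun i => b i + mv (σ 0) i, (finRotate (n+1)).trans σ),
          (Fin.last (n+1) : Fin (n+2))) = ((b, σ), (0 : Fin (n+2))) := by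
      rw [flip, dif_neg hlne0, dif_pos rfl]
      have hb2 : (fun i => (b i + mv (σ 0) i) -
          mv (((finRotate (n+1)).trans σ) (Fin.last n)) i) = b := by
        funext i
        rw [Equiv.trans_apply, finRotate_last]
        ring
      have hp2 : (finRotate (n+1)).symm.trans ((finRotate (n+1)).trans σ) = σ := by
        rw [← Equiv.trans_assoc, Equiv.symm_trans_self, Equiv.refl_trans]
      rw [Prod.ext_iff, Prod.ext_iff]
      exact ⟨⟨hb2, hp2⟩, rfl⟩
    rw [hs1, hs2]
    have hval' : Valid N (fun i => b i + mv (σ 0) i) ((finRotate (n+1)).trans σ) :=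
      rot_valid hv hB
    exact ⟨mem_cells.mpr hval', rot_happy_iff.mpr hH, fun hb => hB (rot_bottom_iff.mp hb),
      rfl, fun h => hlne0 (congrArg Prod.snd h)⟩
  · by_cases hl : k = Fin.last (n+1)
    · subst hl
      have hs1 : flip ((b, σ), (Fin.last (n+1) : Fin (n+2)))
          = ((fun i => b i - mv (σ (Fin.last n)) i, (finRotate (n+1)).symm.trans σ),
              (0 : Fin (n+2))) := by
        rw [flip, dif_neg hlne0, dif_pos rfl]
      have hs2 : flip ((fun i => b i - mv (σ (Fin.last n)) i,
            (finRotate (n+1)).symm.trans σ), (0 : Fin (n+2)))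
          = ((b, σ), (Fin.last (n+1) : Fin (n+2))) := by
        rw [flip, dif_pos rfl]
        have hb2 : (fun i => (b i - mv (σ (Fin.last n)) i) +
            mv (((finRotate (n+1)).symm.trans σ) 0) i) = b := by
          funext i
          rw [Equiv.trans_apply, rho_symm_zero]
          ring
        have hp2 : (finRotate (n+1)).trans ((finRotate (n+1)).symm.trans σ) = σ := by
          rw [← Equiv.trans_assoc, Equiv.self_trans_symm, Equiv.refl_trans]
        rw [Prod.ext_iff, Prod.ext_iff]
        exact ⟨⟨hb2, hp2⟩, rfl⟩
      rw [hs1, hs2]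
      have hval' : Valid N (fun i => b i - mv (σ (Fin.last n)) i)
          ((finRotate (n+1)).symm.trans σ) := rotinv_valid hv hSp hH
      exact ⟨mem_cells.mpr hval', rotinv_happy_iff.mpr hH,
        fun hb => hB (rotinv_bottom_iff.mp hb), rfl,
        fun h => hlne0 (congrArg Prod.snd h).symm⟩
    · have hk0 : 0 < (k : ℕ) := by
        rcases Nat.eq_zero_or_pos (k : ℕ) with h | h
        · exact absurd (Fin.ext h : k = 0) h0
        · exact h
      have hkn : (k : ℕ) < n + 1 := Fin.val_lt_last hl
      have hs1 : flip ((b, σ), k)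
          = ((b, (Equiv.swap (⟨(k : ℕ) - 1, by omega⟩ : Fin (n+1))
              ⟨(k : ℕ), hkn⟩).trans σ), k) := by
        rw [flip, dif_neg h0, dif_neg hl]
      have hs2 : flip ((b, (Equiv.swap (⟨(k : ℕ) - 1, by omega⟩ : Fin (n+1))
              ⟨(k : ℕ), hkn⟩).trans σ), k) = ((b, σ), k) := by
        rw [flip, dif_neg h0, dif_neg hl]
        rw [Prod.ext_iff, Prod.ext_iff]
        refine ⟨⟨rfl, ?_⟩, rfl⟩
        rw [← Equiv.trans_assoc, Equiv.swap_swap, Equiv.refl_trans]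
      rw [hs1, hs2]
      have hval' := swap_valid hv hSp k hk0 hkn hH hB
      refine ⟨mem_cells.mpr hval', (swap_happy_iff k hk0 hkn).mpr hH,
        fun hb => hB ((swap_bottom_iff k hk0 hkn).mp hb), rfl, ?_⟩
      intro h
      exact swap_ne hk0 hkn
        (congrArg (fun y : ((Fin (n+2) → ℤ) × Equiv.Perm (Fin (n+1))) × Fin (n+2) => y.1.2) h)

end Assembly

section Main

noncomputable def R (n N : ℕ) (c : (Fin (n+1) → ℤ) → Fin (n+1)) : ZMod 2 :=
  ∑ p ∈ cells n N, if Rainbow c p.1 p.2 then 1 else 0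

theorem R_eq_one : ∀ (n N : ℕ) (c : (Fin (n+1) → ℤ) → Fin (n+1)),
    1 ≤ N → Sperner N c → R n N c = 1 := by
  intro n
  induction n with
  | zero =>
    intro N c hN hSp
    have hone : ∀ a : Fin (0+1), a = 0 := fun a => Fin.ext (by have := a.isLt; omega)
    have hcells : cells 0 N = {((fun _ => (N : ℤ)), (1 : Equiv.Perm (Fin 0)))} := by
      ext p
      rw [mem_cells, Finset.mem_singleton]
      constructor
      · intro hv
        have hb : p.1 = fun _ => (N : ℤ) := by
          funext i
          have h0 : i = (0 : Fin 1) := hone i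
          rw [h0]
          have hsum := hv.1
          rw [Fin.sum_univ_one] at hsum
          exact hsum
        have hσ : p.2 = 1 := Equiv.ext fun j => j.elim0
        rw [Prod.ext_iff]
        exact ⟨hb, hσ⟩
      · rintro rfl
        constructor
        · rw [Fin.sum_univ_one]
        · intro k i
          have : vert (fun _ => (N : ℤ)) (1 : Equiv.Perm (Fin 0)) k i = (N : ℤ) := by
            rw [vert]
            simp
          rw [this]
          positivity
    rw [R, hcells, Finset.sum_singleton]
    have hrb : Rainbow c (fun _ => (N : ℤ)) (1 : Equiv.Perm (Fin 0)) := by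
      apply Finset.eq_univ_of_forall
      intro i
      rw [Finset.mem_image]
      exact ⟨0, mem_univ _, (hone _).trans (hone i).symm⟩
    rw [if_pos hrb]
  | succ n ih =>
    intro N c hN hSp
    have step1 : R (n+1) N c
        = ∑ x ∈ cells (n+1) N ×ˢ (univ : Finset (Fin (n+2))),
            if Happy c x.1.1 x.1.2 x.2 then (1 : ZMod 2) else 0 := by
      rw [R, Finset.sum_product]
      exact Finset.sum_congr rfl fun p _ => (sum_happy_eq p.1 p.2).symm
    set S : Finset (((Fin (n+2) → ℤ) × Equiv.Perm (Fin (n+1))) × Fin (n+2)) :=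
      (cells (n+1) N ×ˢ univ).filter (fun x => Happy c x.1.1 x.1.2 x.2) with hS
    have step2 : R (n+1) N c = ∑ _x ∈ S, (1 : ZMod 2) := by
      rw [step1, hS, Finset.sum_filter]
    have hmem_of : ∀ x ∈ S, x.1 ∈ cells (n+1) N ∧ Happy c x.1.1 x.1.2 x.2 := by
      intro x hx
      rw [hS, Finset.mem_filter, Finset.mem_product] at hx
      exact ⟨hx.1.1, hx.2⟩
    have step4 : ∑ _x ∈ S.filter (fun x => ¬ Bottom x.1.1 x.1.2 x.2), (1 : ZMod 2) = 0 := by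
      apply Finset.sum_involution (fun x _ => flip x)
      · intro a _; decide
      · intro a ha _
        rw [Finset.mem_filter] at ha
        obtain ⟨haS, haB⟩ := ha
        obtain ⟨h1, h2⟩ := hmem_of a haS
        exact (flip_spec hN hSp a h1 h2 haB).2.2.2.2
      · intro a ha
        rw [Finset.mem_filter] at ha ⊢
        obtain ⟨haS, haB⟩ := ha
        obtain ⟨h1, h2⟩ := hmem_of a haS
        obtain ⟨m1, m2, m3, _, _⟩ := flip_spec hN hSp a h1 h2 haB
        refine ⟨?_, m3⟩
        rw [hS, Finset.mem_filter, Finset.mem_product]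
        exact ⟨⟨m1, mem_univ _⟩, m2⟩
      · intro a ha
        rw [Finset.mem_filter] at ha
        obtain ⟨haS, haB⟩ := ha
        obtain ⟨h1, h2⟩ := hmem_of a haS
        exact (flip_spec hN hSp a h1 h2 haB).2.2.2.1
    have step5 : ∑ _x ∈ S.filter (fun x => Bottom x.1.1 x.1.2 x.2), (1 : ZMod 2)
        = R n N (lowc c) := by
      have hR : R n N (lowc c)
          = ∑ _q ∈ (cells n N).filter (fun q => Rainbow (lowc c) q.1 q.2), (1 : ZMod 2) := by
        rw [R, Finset.sum_filter]
      rw [hR]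
      apply Finset.sum_nbij' (i := fun x => (down (vert x.1.1 x.1.2 1), delift x.1.2))
        (j := fun q => ((fun i => up q.1 i - mv (Fin.last n) i, liftPerm q.2), (0 : Fin (n+2))))
      · intro x hx
        rw [Finset.mem_filter] at hx
        obtain ⟨haS, haB⟩ := hx
        obtain ⟨h1, h2⟩ := hmem_of x haS
        have hv : Valid N x.1.1 x.1.2 := mem_cells.mp h1
        have hchar := bottom_char hN hv haB
        have hun := unlift_valid hv hchar.2.1 hchar.2.2
        rw [Finset.mem_filter]
        refine ⟨mem_cells.mpr hun.1, ?_⟩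
        have hhap : Happy c x.1.1 x.1.2 0 := hchar.1 ▸ h2
        apply (happy_iff_rainbow hSp hun.1).mp
        rw [hun.2, lift_delift hchar.2.1]
        exact hhap
      · intro q hq
        rw [Finset.mem_filter] at hq
        have hvq : Valid N q.1 q.2 := mem_cells.mp hq.1
        rw [Finset.mem_filter]
        constructor
        · rw [hS, Finset.mem_filter, Finset.mem_product]
          exact ⟨⟨mem_cells.mpr (lift_valid hN hvq), mem_univ _⟩,
            (happy_iff_rainbow hSp hvq).mpr hq.2⟩
        · exact lift_bottom
      · intro x hx
        rw [Finset.mem_filter] at hx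
        obtain ⟨haS, haB⟩ := hx
        obtain ⟨h1, _⟩ := hmem_of x haS
        have hv : Valid N x.1.1 x.1.2 := mem_cells.mp h1
        have hchar := bottom_char hN hv haB
        have hun := unlift_valid hv hchar.2.1 hchar.2.2
        rw [Prod.ext_iff, Prod.ext_iff]
        exact ⟨⟨hun.2, lift_delift hchar.2.1⟩, hchar.1.symm⟩
      · intro q _
        have h1 : ∀ i, vert (fun i' => up q.1 i' - mv (Fin.last n) i') (liftPerm q.2) 1 i
            = up q.1 i := by
          intro i
          rw [lift_vert (Nat.zero_le n) i]
          unfold up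
          split
          · rfl
          · rw [vert_zero]
        rw [Prod.ext_iff]
        constructor
        · funext i'
          show vert _ _ 1 i'.castSucc = q.1 i'
          rw [h1 i'.castSucc, up_castSucc]
        · exact delift_lift q.2
      · intro x _
        rfl
    rw [step2, ← Finset.sum_filter_add_sum_filter_not S (fun x => Bottom x.1.1 x.1.2 x.2)
      (fun _ => (1 : ZMod 2)), step4, step5, add_zero]
    exact ih N (lowc c) hN (lowc_sperner hSp)

theorem sperner_exists (n N : ℕ) (hN : 1 ≤ N) (c : (Fin (n+1) → ℤ) → Fin (n+1))
    (hSp : Sperner N c) : ∃ p ∈ cells n N, Rainbow c p.1 p.2 := by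
  by_contra h
  push_neg at h
  have h0 : R n N c = 0 := Finset.sum_eq_zero fun p hp => if_neg (h p hp)
  rw [R_eq_one n N c hN hSp] at h0
  exact one_ne_zero h0

end Main

section Close

lemma vert_close (b : Fin (n+1) → ℤ) (σ : Equiv.Perm (Fin n)) (k : ℕ) (i : Fin (n+1)) :
    |vert b σ k i - b i| ≤ 2 := by
  have h1 : vert b σ k i - b i
      = ∑ j ∈ univ.filter (fun j : Fin n => (j : ℕ) < k), mv (σ j) i := by
    rw [vert]; ring
  rw [h1]
  calc |∑ j ∈ univ.filter (fun j : Fin n => (j : ℕ) < k), mv (σ j) i|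
      ≤ ∑ j ∈ univ.filter (fun j : Fin n => (j : ℕ) < k), |mv (σ j) i| :=
        Finset.abs_sum_le_sum_abs _ _
    _ ≤ ∑ j : Fin n, |mv (σ j) i| := by
        apply Finset.sum_le_sum_of_subset_of_nonneg (Finset.filter_subset _ _)
        intro j _ _
        positivity
    _ = ∑ m : Fin n, |mv m i| := Equiv.sum_comp σ (fun m => |mv m i|)
    _ ≤ ∑ m : Fin n, ((if i = m.castSucc then (1:ℤ) else 0) + (if i = m.succ then 1 else 0)) := by
        apply Finset.sum_le_sum
        intro m _
        unfold mv
        split <;> split <;> simp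
    _ = (∑ m : Fin n, if i = m.castSucc then (1:ℤ) else 0)
        + ∑ m : Fin n, if i = m.succ then (1:ℤ) else 0 := Finset.sum_add_distrib
    _ ≤ 1 + 1 := by
        gcongr
        · calc (∑ m : Fin n, if i = m.castSucc then (1:ℤ) else 0)
              = ((univ.filter (fun m : Fin n => i = m.castSucc)).card : ℤ) := by
                rw [Finset.sum_boole]
            _ ≤ 1 := by
                have : (univ.filter (fun m : Fin n => i = m.castSucc)).card ≤ 1 := by
                  apply Finset.card_le_one.mpr
                  intro a ha b hb
                  rw [Finset.mem_filter] at ha hb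
                  exact Fin.castSucc_injective n (ha.2.symm.trans hb.2)
                exact_mod_cast this
        · calc (∑ m : Fin n, if i = m.succ then (1:ℤ) else 0)
              = ((univ.filter (fun m : Fin n => i = m.succ)).card : ℤ) := by
                rw [Finset.sum_boole]
            _ ≤ 1 := by
                have : (univ.filter (fun m : Fin n => i = m.succ)).card ≤ 1 := by
                  apply Finset.card_le_one.mpr
                  intro a ha b hb
                  rw [Finset.mem_filter] at ha hb
                  exact Fin.succ_injective n (ha.2.symm.trans hb.2)
                exact_mod_cast this
    _ = 2 := by norm_num

end Close

end SimplexSperner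

open SimplexSperner Filter Topology in
/-- A continuous self-map of the standard simplex preserving every closed face is surjective. -/
theorem simplex_selfmap_surjective {n : ℕ}
    (f : (Fin (n + 1) → ℝ) → (Fin (n + 1) → ℝ))
    (hc : ContinuousOn f (stdSimplex ℝ (Fin (n + 1))))
    (hmap : Set.MapsTo f (stdSimplex ℝ (Fin (n + 1))) (stdSimplex ℝ (Fin (n + 1))))
    (hface : ∀ t ∈ stdSimplex ℝ (Fin (n + 1)), ∀ i, t i = 0 → f t i = 0) :
    stdSimplex ℝ (Fin (n + 1)) ⊆ f '' stdSimplex ℝ (Fin (n + 1)) := by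
  classical
  intro y hy
  have key : ∀ M : ℕ, ∃ t : Fin (n+1) → ℝ, ∃ w : Fin (n+1) → (Fin (n+1) → ℝ),
      t ∈ stdSimplex ℝ (Fin (n+1)) ∧ ∀ i, w i ∈ stdSimplex ℝ (Fin (n+1)) ∧
        y i ≤ f (w i) i ∧ ∀ j, dist (w i j) (t j) ≤ 2 / (M + 1) := by
    intro M
    set pt : (Fin (n+1) → ℤ) → (Fin (n+1) → ℝ) := fun x j => (x j : ℝ) / (M+1) with hpt
    have hpt_mem : ∀ x : Fin (n+1) → ℤ, (∀ i, 0 ≤ x i) → (∑ i, x i = ((M+1 : ℕ) : ℤ)) →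
        pt x ∈ stdSimplex ℝ (Fin (n+1)) := by
      intro x h1 h2
      constructor
      · intro i
        apply div_nonneg _ (by positivity)
        exact_mod_cast h1 i
      · rw [hpt]
        rw [← Finset.sum_div]
        rw [show (∑ j, (x j : ℝ)) = ((∑ j, x j : ℤ) : ℝ) by push_cast; ring, h2]
        push_cast
        field_simp
    have hex : ∀ x : Fin (n+1) → ℤ, (∀ i, 0 ≤ x i) → (∑ i, x i = ((M+1 : ℕ) : ℤ)) →
        ∃ i, 0 < x i ∧ y i ≤ f (pt x) i := by
      intro x h1 h2
      by_contra hcon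
      push_neg at hcon
      have hptx := hpt_mem x h1 h2
      have hfx := hmap hptx
      have hle : ∀ i, f (pt x) i ≤ y i := by
        intro i
        rcases eq_or_ne (x i) 0 with h | h
        · have : f (pt x) i = 0 := hface (pt x) hptx i (by simp [hpt, h])
          rw [this]; exact hy.1 i
        · have hpos : 0 < x i := lt_of_le_of_ne (h1 i) (Ne.symm h)
          exact le_of_lt (hcon i hpos)
      have hstrict : ∃ i ∈ Finset.univ, f (pt x) i < y i := by
        have hne : ∃ i, x i ≠ 0 := by
          by_contra hall
          push_neg at hall
          rw [Finset.sum_eq_zero (fun i _ => hall i)] at h2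
          omega
        obtain ⟨i, hi⟩ := hne
        have hpos : 0 < x i := lt_of_le_of_ne (h1 i) (Ne.symm hi)
        exact ⟨i, Finset.mem_univ i, hcon i hpos⟩
      have hlt := Finset.sum_lt_sum (fun i _ => hle i) hstrict
      rw [hfx.2, hy.2] at hlt
      exact lt_irrefl _ hlt
    set c : (Fin (n+1) → ℤ) → Fin (n+1) := fun x =>
      if h : ∃ i, 0 < x i ∧ y i ≤ f (pt x) i then h.choose else 0 with hcdef
    have hSp : Sperner (M+1) c := by
      intro x h1 h2
      have h := hex x h1 h2
      show 0 < x (dite _ _ _)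
      rw [dif_pos h]
      exact h.choose_spec.1
    obtain ⟨p, hp, hrb⟩ := sperner_exists n (M+1) (by omega) c hSp
    have hv : Valid (M+1) p.1 p.2 := mem_cells.mp hp
    have hvert : ∀ i : Fin (n+1), ∃ k : Fin (n+1), c (vert p.1 p.2 (k : ℕ)) = i := by
      intro i
      have hmemi : i ∈ Finset.univ.image (fun k : Fin (n+1) => c (vert p.1 p.2 (k : ℕ))) := by
        rw [Rainbow] at hrb
        rw [hrb]
        exact Finset.mem_univ i
      obtain ⟨k, _, hk⟩ := Finset.mem_image.mp hmemi
      exact ⟨k, hk⟩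
    choose kk hkk using hvert
    have hb_lat : (∀ i, 0 ≤ p.1 i) ∧ ∑ i, p.1 i = ((M+1:ℕ) : ℤ) := by
      constructor
      · intro i
        have := hv.2 0 i
        rwa [vert_zero] at this
      · exact hv.1
    refine ⟨pt p.1, fun i => pt (vert p.1 p.2 (kk i : ℕ)),
      hpt_mem p.1 hb_lat.1 hb_lat.2, fun i => ⟨?_, ?_, ?_⟩⟩
    · exact hpt_mem _ (valid_lattice hv _).1 (valid_lattice hv _).2
    · set x := vert p.1 p.2 (kk i : ℕ) with hx
      have hlat := valid_lattice hv (kk i : ℕ)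
      have h := hex x hlat.1 hlat.2
      have hcx : c x = h.choose := dif_pos h
      have hspec := h.choose_spec.2
      rw [← hcx, hkk i] at hspec
      exact hspec
    · intro j
      rw [Real.dist_eq, hpt]
      rw [div_sub_div_same]
      rw [abs_div]
      have hnum : |((vert p.1 p.2 (kk i : ℕ) j : ℝ)) - (p.1 j : ℝ)| ≤ 2 := by
        have := vert_close p.1 p.2 (kk i : ℕ) j
        have hcast : ((vert p.1 p.2 (kk i : ℕ) j : ℝ)) - (p.1 j : ℝ)
            = ((vert p.1 p.2 (kk i : ℕ) j - p.1 j : ℤ) : ℝ) := by push_cast; ring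
        rw [hcast, ← Int.cast_abs]
        exact_mod_cast this
      have hden : |((M:ℝ) + 1)| = (M:ℝ) + 1 := abs_of_pos (by positivity)
      rw [hden]
      apply div_le_div_of_nonneg_right hnum (by positivity) |>.trans
      · exact le_refl _
  choose t w hkey using key
  have ht : ∀ M, t M ∈ stdSimplex ℝ (Fin (n+1)) := fun M => (hkey M).1
  have hw : ∀ M i, w M i ∈ stdSimplex ℝ (Fin (n+1)) ∧ y i ≤ f (w M i) i ∧
      ∀ j, dist (w M i j) (t M j) ≤ 2 / (M + 1) := fun M => (hkey M).2
  obtain ⟨tstar, htstar, φ, hφ, hconv⟩ :=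
    (isCompact_stdSimplex ℝ (Fin (n+1))).tendsto_subseq ht
  have hwconv : ∀ i, Tendsto (fun m => w (φ m) i) atTop (𝓝 tstar) := by
    intro i
    rw [tendsto_iff_dist_tendsto_zero]
    have hbd : ∀ m, dist (w (φ m) i) tstar ≤ 2 / (m + 1) + dist (t (φ m)) tstar := by
      intro m
      calc dist (w (φ m) i) tstar
          ≤ dist (w (φ m) i) (t (φ m)) + dist (t (φ m)) tstar := dist_triangle _ _ _
        _ ≤ 2 / (m + 1) + dist (t (φ m)) tstar := by
            gcongr
            apply (dist_pi_le_iff (by positivity)).mpr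
            intro j
            calc dist (w (φ m) i j) (t (φ m) j) ≤ 2 / (φ m + 1) := (hw (φ m) i).2.2 j
              _ ≤ 2 / (m + 1) := by
                  apply div_le_div_of_nonneg_left (by norm_num) (by positivity)
                  have hmφ : m ≤ φ m := hφ.le_apply
                  have : (m : ℝ) ≤ (φ m : ℝ) := by exact_mod_cast hmφ
                  linarith
    apply squeeze_zero (fun m => dist_nonneg) hbd
    have h1 : Tendsto (fun m : ℕ => 2 / ((m : ℝ) + 1)) atTop (𝓝 0) := by
      have h0 := tendsto_one_div_add_atTop_nhds_zero_nat (𝕜 := ℝ)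
      have h2 := h0.const_mul (2 : ℝ)
      simp only [mul_zero] at h2
      convert h2 using 2 with m
      ring
    have h2 : Tendsto (fun m => dist (t (φ m)) tstar) atTop (𝓝 0) :=
      tendsto_iff_dist_tendsto_zero.mp hconv
    have := h1.add h2
    simpa using this
  have hfgoal : ∀ i, y i ≤ f tstar i := by
    intro i
    have hcont : ContinuousWithinAt f (stdSimplex ℝ (Fin (n+1))) tstar := hc tstar htstar
    have htend : Tendsto (fun m => f (w (φ m) i)) atTop (𝓝 (f tstar)) := by
      apply hcont.tendsto.comp
      rw [tendsto_nhdsWithin_iff]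
      exact ⟨hwconv i, Eventually.of_forall (fun m => (hw (φ m) i).1)⟩
    have htendi : Tendsto (fun m => f (w (φ m) i) i) atTop (𝓝 (f tstar i)) :=
      ((continuous_apply i).continuousAt.tendsto.comp htend)
    exact ge_of_tendsto' htendi (fun m => (hw (φ m) i).2.1)
  have hft : f tstar ∈ stdSimplex ℝ (Fin (n+1)) := hmap htstar
  have hsum : ∑ i, (f tstar i - y i) = 0 := by
    rw [Finset.sum_sub_distrib, hft.2, hy.2]; ring
  have hzero := (Finset.sum_eq_zero_iff_of_nonneg
    (fun i _ => by have := hfgoal i; linarith)).mp hsum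
  refine ⟨tstar, htstar, funext fun i => ?_⟩
  have := hzero i (Finset.mem_univ i)
  linarith
end
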